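/- arXiv:2303.17889 — 4 statements merged into one kernel-verified Lean document; each statement's English description precedes it below -/
import Mathlib

section
/- A univariate real polynomial p of odd degree d is nonnegative on the interval [a,b] (with a < b) if and only if there exist SOS polynomials f and g with deg(f) ≤ d−1 and deg(g) ≤ d−1 such that p(t) = (t−a)·f(t) + (b−t)·g(t) for all t. -/
open Polynomial

/-- A polynomial is a sum of squares. -/
def IsSOS (p : Polynomial ℝ) : Prop :=
  ∃ (k : ℕ) (q : Fin k → Polynomial ℝ), p = ∑ i, (q i) ^ 2

lemma sos_zero : IsSOS 0 := ⟨0, ![], by simp⟩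

lemma sos_sq (q : ℝ[X]) : IsSOS (q ^ 2) := ⟨1, ![q], by simp⟩

lemma sos_add {p q : ℝ[X]} (hp : IsSOS p) (hq : IsSOS q) : IsSOS (p + q) := by
  obtain ⟨k, u, rfl⟩ := hp
  obtain ⟨l, v, rfl⟩ := hq
  refine ⟨k + l, Fin.append u v, ?_⟩
  rw [Fin.sum_univ_add]
  simp [Fin.append_left, Fin.append_right]

lemma sos_mul {p q : ℝ[X]} (hp : IsSOS p) (hq : IsSOS q) : IsSOS (p * q) := by
  obtain ⟨k, u, rfl⟩ := hp
  obtain ⟨l, v, rfl⟩ := hq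
  refine ⟨k * l, fun i => u (finProdFinEquiv.symm i).1 * v (finProdFinEquiv.symm i).2, ?_⟩
  rw [Finset.sum_mul_sum, ← Equiv.sum_comp (finProdFinEquiv : Fin k × Fin l ≃ Fin (k * l))
    (fun i => (u (finProdFinEquiv.symm i).1 * v (finProdFinEquiv.symm i).2) ^ 2)]
  simp [Fintype.sum_prod_type, mul_pow]

lemma sos_C {c : ℝ} (hc : 0 ≤ c) : IsSOS (C c) := by
  have : C c = (C (Real.sqrt c)) ^ 2 := by
    rw [← C_pow, Real.sq_sqrt hc]
  rw [this]; exact sos_sq _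

lemma sos_eval_nonneg {p : ℝ[X]} (hp : IsSOS p) (t : ℝ) : 0 ≤ p.eval t := by
  obtain ⟨k, u, rfl⟩ := hp
  rw [eval_finset_sum]
  exact Finset.sum_nonneg fun i _ => by rw [eval_pow]; positivity

lemma coeff_sq_two_mul (q : ℝ[X]) {m : ℕ} (h : q.natDegree ≤ m) :
    coeff (q ^ 2) (2 * m) = (coeff q m) ^ 2 := by
  rw [sq, coeff_mul, sq]
  rw [Finset.sum_eq_single (m, m)]
  · intro b hb hne
    rw [Finset.HasAntidiagonal.mem_antidiagonal] at hb
    have : m < b.1 ∨ m < b.2 := by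
      by_contra hc
      push_neg at hc
      apply hne
      have h1 : b.1 = m := by omega
      have h2 : b.2 = m := by omega
      exact Prod.ext h1 h2
    rcases this with h1 | h2
    · rw [coeff_eq_zero_of_natDegree_lt (h.trans_lt h1), zero_mul]
    · rw [coeff_eq_zero_of_natDegree_lt (h.trans_lt h2), mul_zero]
  · intro hmem
    exact absurd (by rw [Finset.HasAntidiagonal.mem_antidiagonal]; ring) hmem

lemma sos_natDegree_even {p : ℝ[X]} (hp : ∃ (k : ℕ) (q : Fin k → Polynomial ℝ), p = ∑ i, (q i) ^ 2) :
    Even p.natDegree := by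
  obtain ⟨k, u, rfl⟩ := hp
  set m := Finset.univ.sup (fun i : Fin k => (u i).natDegree) with hm
  have hle : (∑ i, (u i) ^ 2).natDegree ≤ 2 * m := by
    refine natDegree_sum_le_of_forall_le _ _ fun i _ => ?_
    calc ((u i) ^ 2).natDegree ≤ 2 * (u i).natDegree := natDegree_pow_le
      _ ≤ 2 * m := by
          exact Nat.mul_le_mul_left 2 (Finset.le_sup (f := fun i : Fin k => (u i).natDegree) (Finset.mem_univ i))
  rcases Nat.eq_zero_or_pos m with h0 | hpos
  · have : (∑ i, (u i) ^ 2).natDegree = 0 := by omega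
    simp [this]
  · have hk : (Finset.univ : Finset (Fin k)).Nonempty := by
      rcases (Finset.univ : Finset (Fin k)).eq_empty_or_nonempty with he | hne
      · exfalso; rw [hm, he] at hpos; simp at hpos
      · exact hne
    obtain ⟨i0, _, hi0⟩ := Finset.exists_mem_eq_sup Finset.univ hk
      (fun i : Fin k => (u i).natDegree)
    have hdeg : (u i0).natDegree = m := hi0.symm
    have hne : u i0 ≠ 0 := fun h => by rw [h] at hdeg; simp at hdeg; omega
    have hcoeff : coeff (∑ i, (u i) ^ 2) (2 * m) = ∑ i, (coeff (u i) m) ^ 2 := by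
      rw [finset_sum_coeff]
      exact Finset.sum_congr rfl fun i _ =>
        coeff_sq_two_mul (u i) (Finset.le_sup (f := fun i : Fin k => (u i).natDegree) (Finset.mem_univ i))
    have hpos' : 0 < coeff (∑ i, (u i) ^ 2) (2 * m) := by
      rw [hcoeff]
      have h1 : 0 < (coeff (u i0) m) ^ 2 := by
        have : coeff (u i0) m ≠ 0 := by
          rw [← hdeg, coeff_natDegree]; exact leadingCoeff_ne_zero.mpr hne
        positivity
      refine lt_of_lt_of_le h1 (Finset.single_le_sum (f := fun i => (coeff (u i) m) ^ 2) (fun i _ => sq_nonneg _)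
        (Finset.mem_univ i0))
    have : (∑ i, (u i) ^ 2).natDegree = 2 * m :=
      le_antisymm hle (le_natDegree_of_ne_zero hpos'.ne')
    exact ⟨m, by omega⟩

lemma sos_one : IsSOS (1 : ℝ[X]) := by simpa using sos_sq 1

lemma natDegree_Cb_sub_X (c : ℝ) : ((C c : ℝ[X]) - X).natDegree = 1 := by
  have h : ((C c : ℝ[X]) - X) = -(X - C c) := by ring
  rw [h, natDegree_neg, natDegree_X_sub_C]

/-- Degree-tracked membership in the quadratic module generated by `X-a`, `b-X`,
`(X-a)(b-X)`. -/
def MLRep (a b : ℝ) (d : ℕ) (p : ℝ[X]) : Prop :=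
  ∃ s0 s1 s2 s3 : ℝ[X], IsSOS s0 ∧ IsSOS s1 ∧ IsSOS s2 ∧ IsSOS s3 ∧
    s0.natDegree ≤ d ∧ ((X - C a) * s1).natDegree ≤ d ∧
    ((C b - X) * s2).natDegree ≤ d ∧ ((X - C a) * ((C b - X) * s3)).natDegree ≤ d ∧
    p = s0 + (X - C a) * s1 + (C b - X) * s2 + (X - C a) * ((C b - X) * s3)

namespace MLRep

variable {a b : ℝ} {d e : ℕ} {p q s : ℝ[X]}

lemma zero : MLRep a b d 0 :=
  ⟨0, 0, 0, 0, sos_zero, sos_zero, sos_zero, sos_zero, by simp, by simp, by simp, by simp,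
    by simp⟩

lemma mono (h : MLRep a b d p) (hde : d ≤ e) : MLRep a b e p := by
  obtain ⟨s0, s1, s2, s3, h0, h1, h2, h3, d0, d1, d2, d3, rfl⟩ := h
  exact ⟨s0, s1, s2, s3, h0, h1, h2, h3, d0.trans hde, d1.trans hde, d2.trans hde,
    d3.trans hde, rfl⟩

lemma add (hp : MLRep a b d p) (hq : MLRep a b d q) : MLRep a b d (p + q) := by
  obtain ⟨s0, s1, s2, s3, h0, h1, h2, h3, d0, d1, d2, d3, rfl⟩ := hp
  obtain ⟨t0, t1, t2, t3, g0, g1, g2, g3, e0, e1, e2, e3, rfl⟩ := hq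
  refine ⟨s0 + t0, s1 + t1, s2 + t2, s3 + t3, sos_add h0 g0, sos_add h1 g1, sos_add h2 g2,
    sos_add h3 g3, ?_, ?_, ?_, ?_, by ring⟩
  · exact (natDegree_add_le _ _).trans (max_le d0 e0)
  · rw [mul_add]; exact (natDegree_add_le _ _).trans (max_le d1 e1)
  · rw [mul_add]; exact (natDegree_add_le _ _).trans (max_le d2 e2)
  · rw [mul_add, mul_add]; exact (natDegree_add_le _ _).trans (max_le d3 e3)

lemma ofSOS (hs : IsSOS s) (hd : s.natDegree ≤ d) : MLRep a b d s :=
  ⟨s, 0, 0, 0, hs, sos_zero, sos_zero, sos_zero, hd, by simp, by simp, by simp, by simp⟩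

lemma mul_sos (hp : MLRep a b d p) (hs : IsSOS s) (hd : s.natDegree ≤ e) :
    MLRep a b (e + d) (s * p) := by
  obtain ⟨s0, s1, s2, s3, h0, h1, h2, h3, d0, d1, d2, d3, rfl⟩ := hp
  refine ⟨s * s0, s * s1, s * s2, s * s3, sos_mul hs h0, sos_mul hs h1, sos_mul hs h2,
    sos_mul hs h3, ?_, ?_, ?_, ?_, by ring⟩
  · exact (natDegree_mul_le).trans (add_le_add hd d0)
  · have : (X - C a) * (s * s1) = s * ((X - C a) * s1) := by ring
    rw [this]; exact (natDegree_mul_le).trans (add_le_add hd d1)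
  · have : (C b - X) * (s * s2) = s * ((C b - X) * s2) := by ring
    rw [this]; exact (natDegree_mul_le).trans (add_le_add hd d2)
  · have : (X - C a) * ((C b - X) * (s * s3)) = s * ((X - C a) * ((C b - X) * s3)) := by ring
    rw [this]; exact (natDegree_mul_le).trans (add_le_add hd d3)

lemma mul_left_a (hp : MLRep a b d p) : MLRep a b (1 + d) ((X - C a) * p) := by
  obtain ⟨s0, s1, s2, s3, h0, h1, h2, h3, d0, d1, d2, d3, rfl⟩ := hp
  have hXa : ((X : ℝ[X]) - C a).natDegree ≤ 1 := by simp [natDegree_X_sub_C]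
  refine ⟨(X - C a) ^ 2 * s1, s0, (X - C a) ^ 2 * s3, s2, sos_mul (sos_sq _) h1, h0,
    sos_mul (sos_sq _) h3, h2, ?_, ?_, ?_, ?_, by ring⟩
  · have h : ((X : ℝ[X]) - C a) ^ 2 * s1 = (X - C a) * ((X - C a) * s1) := by ring
    rw [h]; exact (natDegree_mul_le).trans (by omega)
  · exact (natDegree_mul_le).trans (by omega)
  · have h : ((C b : ℝ[X]) - X) * ((X - C a) ^ 2 * s3)
        = (X - C a) * ((X - C a) * ((C b - X) * s3)) := by ring
    rw [h]; exact (natDegree_mul_le).trans (by omega)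
  · have h : ((X : ℝ[X]) - C a) * ((C b - X) * s2) = (X - C a) * ((C b - X) * s2) := rfl
    rw [h]; exact (natDegree_mul_le).trans (by omega)

lemma mul_left_b (hp : MLRep a b d p) : MLRep a b (1 + d) ((C b - X) * p) := by
  obtain ⟨s0, s1, s2, s3, h0, h1, h2, h3, d0, d1, d2, d3, rfl⟩ := hp
  have hXb : ((C b : ℝ[X]) - X).natDegree ≤ 1 := by
    have h : ((C b : ℝ[X]) - X) = -(X - C b) := by ring
    rw [h, natDegree_neg]; simp [natDegree_X_sub_C]
  refine ⟨(C b - X) ^ 2 * s2, (C b - X) ^ 2 * s3, s0, s1, sos_mul (sos_sq _) h2,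
    sos_mul (sos_sq _) h3, h0, h1, ?_, ?_, ?_, ?_, by ring⟩
  · have h : ((C b : ℝ[X]) - X) ^ 2 * s2 = (C b - X) * ((C b - X) * s2) := by ring
    rw [h]; exact (natDegree_mul_le).trans (by omega)
  · have h : ((X : ℝ[X]) - C a) * ((C b - X) ^ 2 * s3)
        = (C b - X) * ((X - C a) * ((C b - X) * s3)) := by ring
    rw [h]; exact (natDegree_mul_le).trans (by omega)
  · exact (natDegree_mul_le).trans (by omega)
  · have h : ((X : ℝ[X]) - C a) * ((C b - X) * s1) = (C b - X) * ((X - C a) * s1) := by ring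
    rw [h]; exact (natDegree_mul_le).trans (by omega)

lemma mul (hp : MLRep a b d p) (hq : MLRep a b e q) : MLRep a b (d + e) (p * q) := by
  obtain ⟨s0, s1, s2, s3, h0, h1, h2, h3, d0, d1, d2, d3, rfl⟩ := hp
  have key : (s0 + (X - C a) * s1 + (C b - X) * s2 + (X - C a) * ((C b - X) * s3)) * q
      = s0 * q + (X - C a) * (s1 * q) + (C b - X) * (s2 * q)
        + (X - C a) * ((C b - X) * (s3 * q)) := by ring
  rw [key]
  have hXa : ((X : ℝ[X]) - C a) ≠ 0 := X_sub_C_ne_zero a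
  have hXb : ((C b : ℝ[X]) - X) ≠ 0 := by
    intro h
    have : ((X : ℝ[X]) - C b) = 0 := by
      have := congrArg Neg.neg h; simpa [neg_sub] using this
    exact X_sub_C_ne_zero b this
  refine add (add (add ?_ ?_) ?_) ?_
  · exact (mul_sos hq h0 d0).mono (by omega)
  · rcases eq_or_ne s1 0 with rfl | hs1
    · simpa using zero
    · have hd1 : s1.natDegree + 1 ≤ d := by
        rw [natDegree_mul hXa hs1, natDegree_X_sub_C] at d1; omega
      exact ((mul_sos hq h1 (le_refl _)).mul_left_a).mono (by omega)
  · rcases eq_or_ne s2 0 with rfl | hs2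
    · simpa using zero
    · have hd2 : s2.natDegree + 1 ≤ d := by
        rw [natDegree_mul hXb hs2] at d2
        have : ((C b : ℝ[X]) - X).natDegree = 1 := by
          have h : ((C b : ℝ[X]) - X) = -(X - C b) := by ring
          rw [h, natDegree_neg, natDegree_X_sub_C]
        omega
      exact ((mul_sos hq h2 (le_refl _)).mul_left_b).mono (by omega)
  · rcases eq_or_ne s3 0 with rfl | hs3
    · simpa using zero
    · have hd3 : s3.natDegree + 2 ≤ d := by
        rw [natDegree_mul hXa (mul_ne_zero hXb hs3), natDegree_X_sub_C,
          natDegree_mul hXb hs3] at d3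
        have : ((C b : ℝ[X]) - X).natDegree = 1 := by
          have h : ((C b : ℝ[X]) - X) = -(X - C b) := by ring
          rw [h, natDegree_neg, natDegree_X_sub_C]
        omega
      exact (((mul_sos hq h3 (le_refl _)).mul_left_b).mul_left_a).mono (by omega)

end MLRep

namespace MLRep

variable {a b : ℝ} {d : ℕ}

lemma natDegree_Cb_sub_X (c : ℝ) : ((C c : ℝ[X]) - X).natDegree = 1 := by
  have h : ((C c : ℝ[X]) - X) = -(X - C c) := by ring
  rw [h, natDegree_neg, natDegree_X_sub_C]

lemma lin_left {r : ℝ} (hr : r ≤ a) : MLRep a b 1 (X - C r) := by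
  refine ⟨C (a - r), 1, 0, 0, sos_C (by linarith), sos_one, sos_zero, sos_zero, ?_, ?_, ?_, ?_, ?_⟩
  · simp [natDegree_C]
  · simp [natDegree_X_sub_C]
  · simp
  · simp
  · rw [C_sub]; ring

lemma lin_right {r : ℝ} (hr : b ≤ r) : MLRep a b 1 (C r - X) := by
  refine ⟨C (r - b), 0, 1, 0, sos_C (by linarith), sos_zero, sos_one, sos_zero, ?_, ?_, ?_, ?_, ?_⟩
  · simp [natDegree_C]
  · simp
  · simp [natDegree_Cb_sub_X]
  · simp
  · rw [C_sub]; ring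

end MLRep

lemma eval_nonneg_closure {q : ℝ[X]} {s : Set ℝ} (h : ∀ x ∈ s, 0 ≤ q.eval x) {x : ℝ}
    (hx : x ∈ closure s) : 0 ≤ q.eval x := by
  have hc : IsClosed {y : ℝ | 0 ≤ q.eval y} :=
    isClosed_le continuous_const (q.continuous)
  exact hc.closure_subset_iff.mpr h hx

theorem main_rep (a b : ℝ) (hab : a < b) :
    ∀ n (p : ℝ[X]), p.natDegree ≤ n → (∀ t ∈ Set.Icc a b, 0 ≤ p.eval t) →
      MLRep a b p.natDegree p := by
  have const_case : ∀ p : ℝ[X], p.natDegree = 0 → (∀ t ∈ Set.Icc a b, 0 ≤ p.eval t) →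
      MLRep a b p.natDegree p := by
    intro p h0 hpos
    obtain ⟨c, hcp⟩ : ∃ c, p = C c := ⟨_, eq_C_of_natDegree_eq_zero h0⟩
    subst hcp
    have hc : 0 ≤ c := by simpa using hpos a ⟨le_refl a, hab.le⟩
    exact MLRep.ofSOS (sos_C hc) (by simp)
  intro n
  induction n with
  | zero =>
    intro p hdeg hpos
    exact const_case p (Nat.le_zero.mp hdeg) hpos
  | succ n ih =>
    intro p hdeg hpos
    by_cases h0 : p.natDegree = 0
    · exact const_case p h0 hpos
    have hp0 : p ≠ 0 := fun h => h0 (by simp [h])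
    by_cases hroot : ∃ r : ℝ, p.IsRoot r
    · obtain ⟨r, hr⟩ := hroot
      obtain ⟨q, hq⟩ := dvd_iff_isRoot.mpr hr
      have hq0 : q ≠ 0 := by rintro rfl; rw [mul_zero] at hq; exact hp0 hq
      have hdq : p.natDegree = 1 + q.natDegree := by
        rw [hq, natDegree_mul (X_sub_C_ne_zero r) hq0, natDegree_X_sub_C]
      rcases le_or_gt r a with hra | hra
      · -- root left of the interval
        have hqpos : ∀ t ∈ Set.Ioc a b, 0 ≤ q.eval t := by
          intro t ht
          have h1 : 0 < t - r := by linarith [ht.1]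
          have h2 : 0 ≤ (t - r) * q.eval t := by
            have := hpos t ⟨ht.1.le, ht.2⟩
            rwa [hq, eval_mul, eval_sub, eval_X, eval_C] at this
          exact (mul_nonneg_iff_of_pos_left h1).mp h2
        have hqicc : ∀ t ∈ Set.Icc a b, 0 ≤ q.eval t := fun t ht =>
          eval_nonneg_closure hqpos (by rw [closure_Ioc hab.ne]; exact ht)
        have hrep := (MLRep.lin_left hra (b := b)).mul (ih q (by omega) hqicc)
        rw [hdq, hq]; exact hrep
      rcases le_or_gt b r with hrb | hrb
      · -- root right of the interval
        have hq' : p = (C r - X) * (-q) := by rw [hq]; ring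
        have hqpos : ∀ t ∈ Set.Ico a b, 0 ≤ (-q).eval t := by
          intro t ht
          have h1 : 0 < r - t := by linarith [ht.2]
          have h2 : 0 ≤ (r - t) * (-q).eval t := by
            have h3 := hpos t ⟨ht.1, ht.2.le⟩
            rw [hq, eval_mul, eval_sub, eval_X, eval_C] at h3
            rw [eval_neg]; nlinarith
          exact (mul_nonneg_iff_of_pos_left h1).mp h2
        have hqicc : ∀ t ∈ Set.Icc a b, 0 ≤ (-q).eval t := fun t ht =>
          eval_nonneg_closure hqpos (by rw [closure_Ico hab.ne]; exact ht)
        have hrep := (MLRep.lin_right hrb (a := a)).mul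
          (ih (-q) (by rw [natDegree_neg]; omega) hqicc)
        rw [hdq, hq', ← natDegree_neg q]; exact hrep
      · -- root inside the interval: double root
        have hright : ∀ t ∈ Set.Ioc r b, 0 ≤ q.eval t := by
          intro t ht
          have h1 : 0 < t - r := by linarith [ht.1]
          have h2 : 0 ≤ (t - r) * q.eval t := by
            have := hpos t ⟨by linarith [ht.1], ht.2⟩
            rwa [hq, eval_mul, eval_sub, eval_X, eval_C] at this
          exact (mul_nonneg_iff_of_pos_left h1).mp h2
        have hleft : ∀ t ∈ Set.Ico a r, 0 ≤ (-q).eval t := by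
          intro t ht
          have h1 : 0 < r - t := by linarith [ht.2]
          have h2 : 0 ≤ (r - t) * (-q).eval t := by
            have h3 := hpos t ⟨ht.1, by linarith [ht.2]⟩
            rw [hq, eval_mul, eval_sub, eval_X, eval_C] at h3
            rw [eval_neg]; nlinarith
          exact (mul_nonneg_iff_of_pos_left h1).mp h2
        have hqr : q.eval r = 0 := by
          have h1 : 0 ≤ q.eval r :=
            eval_nonneg_closure hright (by rw [closure_Ioc hrb.ne]; exact ⟨le_refl r, hrb.le⟩)
          have h2 : 0 ≤ (-q).eval r :=
            eval_nonneg_closure hleft (by rw [closure_Ico hra.ne]; exact ⟨hra.le, le_refl r⟩)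
          rw [eval_neg] at h2; linarith
        obtain ⟨h, hh⟩ := dvd_iff_isRoot.mpr hqr
        have hp2 : p = (X - C r) ^ 2 * h := by rw [hq, hh]; ring
        have hh0 : h ≠ 0 := by rintro rfl; rw [mul_zero] at hh; exact hq0 hh
        have hsqdeg : (((X : ℝ[X]) - C r) ^ 2).natDegree = 2 := by
          rw [natDegree_pow, natDegree_X_sub_C]
        have hdh : p.natDegree = 2 + h.natDegree := by
          have hd := congrArg natDegree hp2
          rwa [natDegree_mul (pow_ne_zero 2 (X_sub_C_ne_zero r)) hh0, hsqdeg] at hd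
        have hne : ∀ t ∈ Set.Icc a b, t ≠ r → 0 ≤ h.eval t := by
          intro t ht htr
          have hsub : t - r ≠ 0 := sub_ne_zero.mpr htr
          have hsq : 0 < (t - r) ^ 2 := by positivity
          have h2 : 0 ≤ (t - r) ^ 2 * h.eval t := by
            have := hpos t ht
            rwa [hp2, eval_mul, eval_pow, eval_sub, eval_X, eval_C] at this
          exact (mul_nonneg_iff_of_pos_left hsq).mp h2
        have hhpos : ∀ t ∈ Set.Icc a b, 0 ≤ h.eval t := by
          intro t ht
          by_cases htr : t = r
          · subst htr
            refine eval_nonneg_closure (s := Set.Ioc t b) ?_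
              (by rw [closure_Ioc hrb.ne]; exact ⟨le_refl t, hrb.le⟩)
            intro u hu
            exact hne u ⟨by linarith [hu.1, ht.1], hu.2⟩ (ne_of_gt hu.1)
          · exact hne t ht htr
        have hrep := (MLRep.ofSOS (a := a) (b := b) (sos_sq (X - C r))
          (le_of_eq hsqdeg)).mul (ih h (by omega) hhpos)
        rw [hdh, hp2]; exact hrep
    · -- no real root: extract a positive quadratic factor
      have hdpos : 0 < p.degree := natDegree_pos_iff_degree_pos.mp (by omega)
      obtain ⟨z, hz⟩ := IsAlgClosed.exists_aeval_eq_zero ℂ p hdpos.ne'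
      have hzim : z.im ≠ 0 := by
        intro him
        have hzre : z = (z.re : ℂ) := Complex.ext (by simp) (by simp [him])
        rw [hzre] at hz
        erw [aeval_ofReal, RCLike.ofReal_eq_zero] at hz
        exact hroot ⟨z.re, hz⟩
      obtain ⟨h, hq⟩ := p.quadratic_dvd_of_aeval_eq_zero_im_ne_zero hz hzim
      set qd : ℝ[X] := X ^ 2 - C (2 * z.re) * X + C (‖z‖ ^ 2) with hqd_def
      have hqd_eq : qd = (X - C z.re) ^ 2 + C (z.im ^ 2) := by
        have hnorm : ‖z‖ ^ 2 = z.re ^ 2 + z.im ^ 2 := by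
          rw [Complex.sq_norm, Complex.normSq_apply]; ring
        rw [hqd_def, hnorm]
        simp only [C_add, C_mul, C_pow, map_ofNat]
        ring
      have him2 : 0 < z.im ^ 2 := lt_of_le_of_ne (sq_nonneg _) (Ne.symm (pow_ne_zero 2 hzim))
      have hqd_pos : ∀ t : ℝ, 0 < qd.eval t := by
        intro t
        rw [hqd_eq, eval_add, eval_pow, eval_sub, eval_X, eval_C, eval_C]
        nlinarith [sq_nonneg (t - z.re)]
      have hqd0 : qd ≠ 0 := fun hc => by
        have := hqd_pos 0; rw [hc] at this; simp at this
      have hqddeg : qd.natDegree = 2 := by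
        rw [hqd_eq]
        compute_degree!
      have hh0 : h ≠ 0 := by rintro rfl; rw [mul_zero] at hq; exact hp0 hq
      have hdh : p.natDegree = 2 + h.natDegree := by
        have hd := congrArg natDegree hq
        rwa [natDegree_mul hqd0 hh0, hqddeg] at hd
      have hhpos : ∀ t ∈ Set.Icc a b, 0 ≤ h.eval t := by
        intro t ht
        have h2 : 0 ≤ qd.eval t * h.eval t := by
          have := hpos t ht
          rwa [hq, eval_mul] at this
        exact (mul_nonneg_iff_of_pos_left (hqd_pos t)).mp h2
      have hqd_sos : IsSOS qd := by
        rw [hqd_eq]; exact sos_add (sos_sq _) (sos_C (sq_nonneg _))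
      have hrep := (MLRep.ofSOS (a := a) (b := b) hqd_sos (le_of_eq hqddeg)).mul
        (ih h (by omega) hhpos)
      rw [hdh, hq]; exact hrep

theorem stmt0 (a b : ℝ) (hab : a < b) (p : Polynomial ℝ) (hodd : Odd p.natDegree) :
    (∀ t ∈ Set.Icc a b, 0 ≤ p.eval t) ↔
      ∃ f g : Polynomial ℝ, IsSOS f ∧ IsSOS g ∧
        f.natDegree ≤ p.natDegree - 1 ∧ g.natDegree ≤ p.natDegree - 1 ∧
        ∀ t : ℝ, p.eval t = (t - a) * f.eval t + (b - t) * g.eval t := by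
  constructor
  · intro hpos
    obtain ⟨s0, s1, s2, s3, h0, h1, h2, h3, d0, d1, d2, d3, hp⟩ :=
      main_rep a b hab p.natDegree p le_rfl hpos
    set d := p.natDegree with hd
    obtain ⟨m, hm⟩ := hodd
    set c : ℝ := (b - a)⁻¹ with hc
    have hcnn : 0 ≤ c := by
      rw [hc]; exact inv_nonneg.mpr (by linarith)
    have hba : b - a ≠ 0 := sub_ne_zero.mpr hab.ne'
    have hCbX : ((C b : ℝ[X]) - X) ≠ 0 := by
      intro hcon
      have h := natDegree_Cb_sub_X b
      rw [hcon] at h; simp at h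
    refine ⟨s1 + C c * (s0 + (C b - X) ^ 2 * s3), s2 + C c * (s0 + (X - C a) ^ 2 * s3),
      ?_, ?_, ?_, ?_, ?_⟩
    · exact sos_add h1 (sos_mul (sos_C hcnn) (sos_add h0 (sos_mul (sos_sq _) h3)))
    · exact sos_add h2 (sos_mul (sos_C hcnn) (sos_add h0 (sos_mul (sos_sq _) h3)))
    · -- degree bound for f
      have hb0 : s0.natDegree ≤ d - 1 := by
        obtain ⟨k0, hk0⟩ := sos_natDegree_even h0; omega
      have hf3 : ((C b - X) ^ 2 * s3).natDegree ≤ d - 1 := by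
        rcases eq_or_ne s3 0 with rfl | hs3
        · simp
        · have hdeg3 : s3.natDegree + 2 ≤ d := by
            rw [natDegree_mul (X_sub_C_ne_zero a) (mul_ne_zero hCbX hs3), natDegree_X_sub_C,
              natDegree_mul hCbX hs3, natDegree_Cb_sub_X] at d3
            omega
          obtain ⟨k3, hk3⟩ := sos_natDegree_even h3
          have hle : ((C b - X) ^ 2 * s3).natDegree ≤ 2 + s3.natDegree := by
            refine natDegree_mul_le.trans (Nat.add_le_add_right ?_ _)
            rw [natDegree_pow, natDegree_Cb_sub_X]
          omega
      have hs1b : s1.natDegree ≤ d - 1 := by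
        rcases eq_or_ne s1 0 with rfl | hs1
        · simp
        · rw [natDegree_mul (X_sub_C_ne_zero a) hs1, natDegree_X_sub_C] at d1; omega
      calc (s1 + C c * (s0 + (C b - X) ^ 2 * s3)).natDegree
          ≤ max s1.natDegree (C c * (s0 + (C b - X) ^ 2 * s3)).natDegree :=
            natDegree_add_le _ _
        _ ≤ d - 1 := by
            exact max_le hs1b ((natDegree_C_mul_le _ _).trans
              ((natDegree_add_le _ _).trans (max_le hb0 hf3)))
    · -- degree bound for g
      have hb0 : s0.natDegree ≤ d - 1 := by
        obtain ⟨k0, hk0⟩ := sos_natDegree_even h0; omega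
      have hf3 : ((X - C a) ^ 2 * s3).natDegree ≤ d - 1 := by
        rcases eq_or_ne s3 0 with rfl | hs3
        · simp
        · have hdeg3 : s3.natDegree + 2 ≤ d := by
            rw [natDegree_mul (X_sub_C_ne_zero a) (mul_ne_zero hCbX hs3), natDegree_X_sub_C,
              natDegree_mul hCbX hs3, natDegree_Cb_sub_X] at d3
            omega
          obtain ⟨k3, hk3⟩ := sos_natDegree_even h3
          have hle : ((X - C a) ^ 2 * s3).natDegree ≤ 2 + s3.natDegree := by
            refine natDegree_mul_le.trans (Nat.add_le_add_right ?_ _)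
            rw [natDegree_pow, natDegree_X_sub_C]
          omega
      have hs2b : s2.natDegree ≤ d - 1 := by
        rcases eq_or_ne s2 0 with rfl | hs2
        · simp
        · rw [natDegree_mul hCbX hs2, natDegree_Cb_sub_X] at d2; omega
      calc (s2 + C c * (s0 + (X - C a) ^ 2 * s3)).natDegree
          ≤ max s2.natDegree (C c * (s0 + (X - C a) ^ 2 * s3)).natDegree :=
            natDegree_add_le _ _
        _ ≤ d - 1 := by
            exact max_le hs2b ((natDegree_C_mul_le _ _).trans
              ((natDegree_add_le _ _).trans (max_le hb0 hf3)))
    · -- the identity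
      have hrel : C c * (C b - C a) = (1 : ℝ[X]) := by
        rw [← C_sub, ← C_mul, hc, inv_mul_cancel₀ hba, C_1]
      have hid : (X - C a) * (s1 + C c * (s0 + (C b - X) ^ 2 * s3))
          + (C b - X) * (s2 + C c * (s0 + (X - C a) ^ 2 * s3)) = p := by
        rw [hp]
        linear_combination (s0 + (X - C a) * ((C b - X) * s3)) * hrel
      intro t
      rw [← hid]
      simp only [eval_add, eval_mul, eval_sub, eval_X, eval_C, eval_pow]
  · rintro ⟨f, g, hf, hg, _, _, heq⟩ t ht
    rw [heq t]
    have h1 : 0 ≤ t - a := by linarith [ht.1]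
    have h2 : 0 ≤ b - t := by linarith [ht.2]
    exact add_nonneg (mul_nonneg h1 (sos_eval_nonneg hf t))
      (mul_nonneg h2 (sos_eval_nonneg hg t))
end

section
/- A univariate real polynomial p of even degree d is nonnegative on the interval [a,b] (with a < b) if and only if there exist SOS polynomials f and g with deg(f) ≤ d and deg(g) ≤ d−2 such that p(t) = f(t) + (t−a)(b−t)·g(t) for all t. -/
open Polynomial

namespace SOSAux

open Set

lemma isSOS_zero : IsSOS 0 := ⟨0, ![], by simp⟩

lemma isSOS_sq (q : Polynomial ℝ) : IsSOS (q ^ 2) := ⟨1, ![q], by simp⟩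

lemma sos_add {f g : Polynomial ℝ} (hf : IsSOS f) (hg : IsSOS g) : IsSOS (f + g) := by
  obtain ⟨k, q, rfl⟩ := hf
  obtain ⟨l, r, rfl⟩ := hg
  exact ⟨k + l, Fin.append q r, by
    rw [Fin.sum_univ_add]
    congr 1 <;> apply Finset.sum_congr rfl <;> intro i _ <;> simp⟩

lemma sos_eval_nonneg {f : Polynomial ℝ} (hf : IsSOS f) (t : ℝ) : 0 ≤ f.eval t := by
  obtain ⟨k, q, rfl⟩ := hf
  simp only [eval_finset_sum, eval_pow]
  exact Finset.sum_nonneg fun i _ => sq_nonneg _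

lemma sos_sq_mul {f : Polynomial ℝ} (hf : IsSOS f) (q : Polynomial ℝ) :
    IsSOS (q ^ 2 * f) := by
  obtain ⟨k, r, rfl⟩ := hf
  exact ⟨k, fun i => q * r i, by rw [Finset.mul_sum]; congr 1; funext i; ring⟩

lemma sos_mul {f g : Polynomial ℝ} (hf : IsSOS f) (hg : IsSOS g) : IsSOS (f * g) := by
  obtain ⟨k, q, rfl⟩ := hf
  rw [Finset.sum_mul]
  apply Finset.sum_induction _ IsSOS (fun _ _ h1 h2 => sos_add h1 h2) isSOS_zero
  intro i _
  exact sos_sq_mul hg (q i)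

lemma isSOS_C {c : ℝ} (hc : 0 ≤ c) : IsSOS (C c) := by
  have : C c = (C (Real.sqrt c)) ^ 2 := by
    rw [← C_pow, Real.sq_sqrt hc]
  rw [this]; exact isSOS_sq _

lemma closure_helper {a b : ℝ} (hab : a < b) (r₀ : ℝ) :
    Icc a b ⊆ closure (Ioo a b \ {r₀}) := by
  by_cases hr : r₀ ∈ Ioo a b
  · have h1 : Ioo a r₀ ⊆ Ioo a b \ {r₀} := fun x hx =>
      ⟨⟨hx.1, hx.2.trans hr.2⟩, fun h => absurd h (by rintro rfl; exact lt_irrefl _ hx.2)⟩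
    have h2 : Ioo r₀ b ⊆ Ioo a b \ {r₀} := fun x hx =>
      ⟨⟨hr.1.trans hx.1, hx.2⟩, fun h => absurd h (by rintro rfl; exact lt_irrefl _ hx.1)⟩
    have := Set.Icc_union_Icc_eq_Icc (le_of_lt hr.1) (le_of_lt hr.2)
    rw [← this]
    apply Set.union_subset
    · rw [← closure_Ioo (ne_of_lt hr.1)]
      exact closure_mono h1
    · rw [← closure_Ioo (ne_of_lt hr.2)]
      exact closure_mono h2
  · rw [Set.diff_singleton_eq_self hr, ← closure_Ioo (ne_of_lt hab)]

lemma quotient_nonneg {a b : ℝ} (hab : a < b) {M p₁ : ℝ[X]} (r₀ : ℝ)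
    (hp : ∀ t ∈ Icc a b, 0 ≤ (M * p₁).eval t)
    (hM : ∀ t ∈ Ioo a b \ {r₀}, 0 < M.eval t) :
    ∀ t ∈ Icc a b, 0 ≤ p₁.eval t := by
  intro t ht
  have hcl : IsClosed {x : ℝ | 0 ≤ p₁.eval x} :=
    isClosed_le continuous_const (Polynomial.continuous p₁)
  have hsub : Ioo a b \ {r₀} ⊆ {x : ℝ | 0 ≤ p₁.eval x} := by
    intro x hx
    have h1 := hp x ⟨le_of_lt hx.1.1, le_of_lt hx.1.2⟩
    rw [eval_mul] at h1
    exact nonneg_of_mul_nonneg_right h1 (hM x hx)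
  exact (hcl.closure_subset_iff.2 hsub) (closure_helper hab r₀ ht)

lemma interior_sq_dvd {a b : ℝ} {p : ℝ[X]} (hp : p ≠ 0)
    (h : ∀ t ∈ Icc a b, 0 ≤ p.eval t) {r : ℝ} (hr : r ∈ Ioo a b) (hroot : p.IsRoot r) :
    (X - C r) ^ 2 ∣ p := by
  set m := p.rootMultiplicity r with hm
  set q := p /ₘ (X - C r) ^ m with hq
  have hfac : (X - C r) ^ m * q = p := p.pow_mul_divByMonic_rootMultiplicity_eq r
  have hqr : q.eval r ≠ 0 := eval_divByMonic_pow_rootMultiplicity_ne_zero r hp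
  have heval : ∀ t, p.eval t = (t - r) ^ m * q.eval t := by
    intro t; rw [← hfac]; simp [eval_pow]
  have hm1 : 1 ≤ m := (rootMultiplicity_pos hp).2 hroot
  have hmeven : Even m := by
    by_contra hodd
    rw [Nat.not_even_iff_odd] at hodd
    rcases lt_or_gt_of_ne hqr with hneg | hpos
    · have hopen : IsOpen {x : ℝ | q.eval x < 0} :=
        isOpen_lt (Polynomial.continuous q) continuous_const
      obtain ⟨ε, hε, hball⟩ := Metric.isOpen_iff.1 hopen r hneg
      set t := (r + min b (r + ε)) / 2 with htdef
      have h1 : r < min b (r + ε) := lt_min hr.2 (by linarith)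
      have htr : r < t := by rw [htdef]; linarith
      have htb : t < b := by
        have : t < min b (r + ε) := by rw [htdef]; linarith
        exact this.trans_le (min_le_left _ _)
      have htε : |t - r| < ε := by
        have h2 : t - r < ε := by
          have : t < r + ε := by
            have : t < min b (r + ε) := by rw [htdef]; linarith
            exact this.trans_le (min_le_right _ _)
          linarith
        rw [abs_of_pos (by linarith)]; exact h2
      have hqt : q.eval t < 0 := hball (by rwa [Metric.mem_ball, Real.dist_eq])
      have hpt : p.eval t < 0 := by
        rw [heval t]
        exact mul_neg_of_pos_of_neg (pow_pos (by linarith) m) hqt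
      exact absurd (h t ⟨by linarith [hr.1], le_of_lt htb⟩) (not_le.2 hpt)
    · have hopen : IsOpen {x : ℝ | 0 < q.eval x} :=
        isOpen_lt continuous_const (Polynomial.continuous q)
      obtain ⟨ε, hε, hball⟩ := Metric.isOpen_iff.1 hopen r hpos
      set t := (max a (r - ε) + r) / 2 with htdef
      have h1 : max a (r - ε) < r := max_lt hr.1 (by linarith)
      have htr : t < r := by rw [htdef]; linarith
      have hta : a < t := by
        have : max a (r - ε) < t := by rw [htdef]; linarith
        exact (le_max_left _ _).trans_lt this
      have htε : |t - r| < ε := by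
        have h2 : r - t < ε := by
          have : r - ε ≤ max a (r - ε) := le_max_right _ _
          rw [htdef]; linarith
        rw [abs_of_neg (by linarith)]; linarith
      have hqt : 0 < q.eval t := hball (by rwa [Metric.mem_ball, Real.dist_eq])
      have hpt : p.eval t < 0 := by
        rw [heval t]
        exact mul_neg_of_neg_of_pos (hodd.pow_neg (by linarith)) hqt
      exact absurd (h t ⟨le_of_lt hta, by linarith [hr.2]⟩) (not_le.2 hpt)
  have hm2 : 2 ≤ m := by
    rcases hmeven with ⟨k, hk⟩; omega
  exact dvd_trans (pow_dvd_pow _ hm2) (p.pow_rootMultiplicity_dvd r)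

lemma quad_factor {p : ℝ[X]} (h1 : 1 ≤ p.natDegree) (hnoroot : ∀ r : ℝ, ¬ p.IsRoot r) :
    ∃ α β : ℝ, β ≠ 0 ∧ (X ^ 2 - C (2 * α) * X + C (α ^ 2 + β ^ 2)) ∣ p := by
  have hp0 : p ≠ 0 := fun h => by simp [h] at h1
  have hdeg : 0 < (p.map (algebraMap ℝ ℂ)).degree := by
    rw [degree_map_eq_of_injective (algebraMap ℝ ℂ).injective]
    exact natDegree_pos_iff_degree_pos.1 h1
  obtain ⟨z, hz⟩ := Complex.exists_root hdeg
  have haev : aeval z p = 0 := by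
    rw [aeval_def, ← eval_map]; exact hz
  have him : z.im ≠ 0 := by
    intro him
    have hzre : (z.re : ℂ) = z := by
      apply Complex.ext <;> simp [him]
    apply hnoroot z.re
    have h2 : aeval ((z.re : ℝ) : ℂ) p = 0 := by rw [hzre]; exact haev
    have h3 := Polynomial.aeval_algebraMap_apply_eq_algebraMap_eval (A := ℂ) z.re p
    rw [show (algebraMap ℝ ℂ) z.re = ((z.re : ℝ) : ℂ) from rfl, h2] at h3
    have h4 : (algebraMap ℝ ℂ) (p.eval z.re) = 0 := h3.symm
    rwa [map_eq_zero_iff _ (algebraMap ℝ ℂ).injective] at h4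
  refine ⟨z.re, z.im, him, ?_⟩
  have := p.quadratic_dvd_of_aeval_eq_zero_im_ne_zero haev him
  convert this using 3
  rw [Complex.sq_norm, Complex.normSq_apply]
  ring

lemma odd_root : ∀ n : ℕ, ∀ q : ℝ[X], q.natDegree ≤ n → Odd q.natDegree →
    ∃ r : ℝ, q.IsRoot r := by
  intro n
  induction n using Nat.strong_induction_on with
  | _ n ih =>
    intro q hqn hodd
    by_cases hroot : ∃ r : ℝ, q.IsRoot r
    · exact hroot
    push_neg at hroot
    have h1 : 1 ≤ q.natDegree := hodd.pos
    obtain ⟨α, β, hβ, ⟨q₁, hq₁⟩⟩ := quad_factor h1 hroot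
    have hq0 : q ≠ 0 := fun h => by simp [h] at h1
    have hQdeg : (X ^ 2 - C (2 * α) * X + C (α ^ 2 + β ^ 2) : ℝ[X]).natDegree = 2 := by
      compute_degree!
    have hQ0 : (X ^ 2 - C (2 * α) * X + C (α ^ 2 + β ^ 2) : ℝ[X]) ≠ 0 := by
      intro h
      rw [h] at hQdeg; simp at hQdeg
    have hq₁0 : q₁ ≠ 0 := by rintro rfl; rw [mul_zero] at hq₁; exact hq0 hq₁
    have hdeg : q.natDegree = 2 + q₁.natDegree := by
      rw [hq₁, natDegree_mul hQ0 hq₁0, hQdeg]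
    have hodd₁ : Odd q₁.natDegree := by
      rcases hodd with ⟨k, hk⟩; rw [hdeg] at hk; exact ⟨k - 1, by omega⟩
    have hlt : q₁.natDegree < n := by omega
    obtain ⟨r, hr⟩ := ih q₁.natDegree hlt q₁ le_rfl hodd₁
    exact ⟨r, by rw [hq₁]; simp [IsRoot, hr.eq_zero]⟩

lemma deg_aux1 (s c : ℝ) : ((C s * (X - C c)) ^ 2 : ℝ[X]).natDegree ≤ 2 := by
  apply (natDegree_pow _ _).le.trans
  have h1 : (C s * (X - C c) : ℝ[X]).natDegree ≤ 1 :=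
    (natDegree_mul_le).trans (by simp [natDegree_X_sub_C])
  omega

lemma deg_aux2 (s c : ℝ) : ((C s * (C c - X)) ^ 2 : ℝ[X]).natDegree ≤ 2 := by
  apply (natDegree_pow _ _).le.trans
  have h1 : (C s * (C c - X) : ℝ[X]).natDegree ≤ 1 := by
    apply (natDegree_mul_le).trans
    have : (C c - X : ℝ[X]).natDegree ≤ 1 :=
      (natDegree_sub_le _ _).trans (by simp)
    simp; omega
  omega

lemma deg_aux3 (s : ℝ) : ((C s) ^ 2 : ℝ[X]).natDegree ≤ 2 := by
  rw [← C_pow, natDegree_C]; omega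

lemma pair_ll {a b : ℝ} (hab : a < b) {r r' : ℝ} (h1 : r ≤ a) (h2 : r' ≤ a) :
    ∃ (F : ℝ[X]) (γ : ℝ), IsSOS F ∧ F.natDegree ≤ 2 ∧ 0 ≤ γ ∧
      ∀ t : ℝ, (t - r) * (t - r') = F.eval t + (t - a) * (b - t) * γ := by
  set L := b - a with hL
  have hL0 : 0 < L := by simp [hL]; linarith
  set γ := ((a - r) + (a - r')) / L with hγ
  have hγ0 : 0 ≤ γ := div_nonneg (by linarith) hL0.le
  refine ⟨(C (Real.sqrt (1 + γ)) * (X - C a)) ^ 2 + (C (Real.sqrt ((a - r) * (a - r')))) ^ 2,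
    γ, sos_add (isSOS_sq _) (isSOS_sq _), ?_, hγ0, ?_⟩
  · exact (natDegree_add_le _ _).trans (by
      simp only [max_le_iff]; exact ⟨deg_aux1 _ _, deg_aux3 _⟩)
  · intro t
    simp only [eval_add, eval_pow, eval_mul, eval_sub, eval_C, eval_X]
    rw [mul_pow, Real.sq_sqrt (by linarith), Real.sq_sqrt (by nlinarith)]
    rw [hγ]
    field_simp
    ring

lemma pair_rr {a b : ℝ} (hab : a < b) {r r' : ℝ} (h1 : b ≤ r) (h2 : b ≤ r') :
    ∃ (F : ℝ[X]) (γ : ℝ), IsSOS F ∧ F.natDegree ≤ 2 ∧ 0 ≤ γ ∧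
      ∀ t : ℝ, (t - r) * (t - r') = F.eval t + (t - a) * (b - t) * γ := by
  set L := b - a with hL
  have hL0 : 0 < L := by simp [hL]; linarith
  set γ := ((r - b) + (r' - b)) / L with hγ
  have hγ0 : 0 ≤ γ := div_nonneg (by linarith) hL0.le
  refine ⟨(C (Real.sqrt (1 + γ)) * (C b - X)) ^ 2 + (C (Real.sqrt ((r - b) * (r' - b)))) ^ 2,
    γ, sos_add (isSOS_sq _) (isSOS_sq _), ?_, hγ0, ?_⟩
  · exact (natDegree_add_le _ _).trans (by
      simp only [max_le_iff]; exact ⟨deg_aux2 _ _, deg_aux3 _⟩)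
  · intro t
    simp only [eval_add, eval_pow, eval_mul, eval_sub, eval_C, eval_X]
    rw [mul_pow, Real.sq_sqrt (by linarith), Real.sq_sqrt (by nlinarith)]
    rw [hγ]
    field_simp
    ring

lemma pair_mixed {a b : ℝ} (hab : a < b) {r r' : ℝ} (h1 : r ≤ a) (h2 : b ≤ r') :
    ∃ (F : ℝ[X]) (γ : ℝ), IsSOS F ∧ F.natDegree ≤ 2 ∧ 0 ≤ γ ∧
      ∀ t : ℝ, (t - r) * (r' - t) = F.eval t + (t - a) * (b - t) * γ := by
  set L := b - a with hL
  have hL0 : 0 < L := by simp [hL]; linarith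
  set γ := 1 + ((a - r) + (r' - b)) / L with hγ
  have hγ0 : 0 ≤ γ := by
    have h3 : 0 ≤ ((a - r) + (r' - b)) / L := div_nonneg (by linarith) hL0.le
    rw [hγ]; linarith
  refine ⟨(C (Real.sqrt ((r' - b) / L)) * (X - C a)) ^ 2 +
      ((C (Real.sqrt ((a - r) / L)) * (C b - X)) ^ 2 +
      (C (Real.sqrt ((a - r) * (r' - b)))) ^ 2),
    γ, sos_add (isSOS_sq _) (sos_add (isSOS_sq _) (isSOS_sq _)), ?_, hγ0, ?_⟩
  · apply (natDegree_add_le _ _).trans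
    simp only [max_le_iff]
    refine ⟨deg_aux1 _ _, (natDegree_add_le _ _).trans ?_⟩
    simp only [max_le_iff]; exact ⟨deg_aux2 _ _, deg_aux3 _⟩
  · intro t
    simp only [eval_add, eval_pow, eval_mul, eval_sub, eval_C, eval_X]
    rw [mul_pow, mul_pow, Real.sq_sqrt (div_nonneg (by linarith) hL0.le),
      Real.sq_sqrt (div_nonneg (by linarith) hL0.le), Real.sq_sqrt (by nlinarith)]
    rw [hγ]
    field_simp
    ring

lemma main {a b : ℝ} (hab : a < b) :
    ∀ d : ℕ, ∀ p : ℝ[X], p.natDegree ≤ d → Even p.natDegree →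
      (∀ t ∈ Icc a b, 0 ≤ p.eval t) →
      ∃ f g : ℝ[X], IsSOS f ∧ IsSOS g ∧ f.natDegree ≤ p.natDegree ∧
        (g = 0 ∨ g.natDegree + 2 ≤ p.natDegree) ∧
        ∀ t : ℝ, p.eval t = f.eval t + (t - a) * (b - t) * g.eval t := by
  intro d
  induction d using Nat.strong_induction_on with
  | _ d ih =>
    intro p hpd heven hpos
    by_cases h0 : p.natDegree = 0
    · -- constant case
      have hpC : p = C (p.coeff 0) := eq_C_of_natDegree_eq_zero h0
      have hc : 0 ≤ p.coeff 0 := by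
        have := hpos a ⟨le_refl a, hab.le⟩
        rwa [hpC, eval_C] at this
      refine ⟨(C (Real.sqrt (p.coeff 0))) ^ 2, 0, isSOS_sq _, isSOS_zero, ?_, Or.inl rfl, ?_⟩
      · rw [← C_pow, natDegree_C]; omega
      · intro t
        rw [hpC]
        simp [Real.sq_sqrt hc]
    · have hd2 : 2 ≤ p.natDegree := by
        rcases heven with ⟨k, hk⟩; omega
      have hp0 : p ≠ 0 := fun h => by simp [h] at h0
      obtain ⟨M, F, γ, r₀, hdvd, hM2, hMne, hF, hF2, hγ, hid, hMpos⟩ :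
          ∃ (M F : ℝ[X]) (γ r₀ : ℝ), M ∣ p ∧ M.natDegree = 2 ∧ M ≠ 0 ∧ IsSOS F ∧
            F.natDegree ≤ 2 ∧ 0 ≤ γ ∧
            (∀ t : ℝ, M.eval t = F.eval t + (t - a) * (b - t) * γ) ∧
            (∀ t ∈ Ioo a b \ {r₀}, 0 < M.eval t) := by
        by_cases hroot : ∃ r : ℝ, p.IsRoot r
        · by_cases hint : ∃ r ∈ Ioo a b, p.IsRoot r
          · obtain ⟨r, hrI, hr⟩ := hint
            refine ⟨(X - C r) ^ 2, (X - C r) ^ 2, 0, r,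
              interior_sq_dvd hp0 hpos hrI hr, ?_, ?_, isSOS_sq _, ?_, le_refl 0, ?_, ?_⟩
            · rw [natDegree_pow, natDegree_X_sub_C]
            · exact pow_ne_zero _ (X_sub_C_ne_zero r)
            · rw [natDegree_pow, natDegree_X_sub_C]
            · intro t; ring
            · intro t ht
              have htr : t ≠ r := by
                intro h; exact ht.2 (by simp [h])
              simp only [eval_pow, eval_sub, eval_C, eval_X]
              exact pow_two_pos_of_ne_zero (sub_ne_zero.2 htr)
          · push_neg at hint
            obtain ⟨r, hr⟩ := hroot
            have hrpos : r ≤ a ∨ b ≤ r := by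
              by_contra hcon
              push_neg at hcon
              exact hint r ⟨hcon.1, hcon.2⟩ hr
            obtain ⟨q, hq⟩ := dvd_iff_isRoot.2 hr
            have hq0 : q ≠ 0 := by rintro rfl; rw [mul_zero] at hq; exact hp0 hq
            have hdegq : p.natDegree = 1 + q.natDegree := by
              rw [hq, natDegree_mul (X_sub_C_ne_zero r) hq0, natDegree_X_sub_C]
            have hqodd : Odd q.natDegree := by
              rcases heven with ⟨k, hk⟩
              rw [Nat.odd_iff]; omega
            obtain ⟨r', hr'⟩ := odd_root q.natDegree q le_rfl hqodd
            have hr'p : p.IsRoot r' := by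
              rw [hq]; simp [IsRoot, hr'.eq_zero]
            have hr'pos : r' ≤ a ∨ b ≤ r' := by
              by_contra hcon
              push_neg at hcon
              exact hint r' ⟨hcon.1, hcon.2⟩ hr'p
            have hdvd2 : (X - C r) * (X - C r') ∣ p := by
              rw [hq]; exact mul_dvd_mul_left _ (dvd_iff_isRoot.2 hr')
            have hdeg2 : ((X - C r) * (X - C r') : ℝ[X]).natDegree = 2 := by
              rw [natDegree_mul (X_sub_C_ne_zero r) (X_sub_C_ne_zero r'),
                natDegree_X_sub_C, natDegree_X_sub_C]
            have hne2 : ((X - C r) * (X - C r') : ℝ[X]) ≠ 0 :=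
              mul_ne_zero (X_sub_C_ne_zero r) (X_sub_C_ne_zero r')
            rcases hrpos with h1 | h1 <;> rcases hr'pos with h2 | h2
            · obtain ⟨F, γ, hF, hF2, hγ, hid⟩ := pair_ll hab h1 h2
              refine ⟨(X - C r) * (X - C r'), F, γ, a, hdvd2, hdeg2, hne2, hF, hF2, hγ, ?_, ?_⟩
              · intro t
                simpa only [eval_mul, eval_sub, eval_C, eval_X] using hid t
              · intro t ht
                simp only [eval_mul, eval_sub, eval_C, eval_X]
                exact mul_pos (by linarith [ht.1.1]) (by linarith [ht.1.1])
            · obtain ⟨F, γ, hF, hF2, hγ, hid⟩ := pair_mixed hab h1 h2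
              refine ⟨-((X - C r) * (X - C r')), F, γ, a, (neg_dvd).2 hdvd2, ?_, ?_,
                hF, hF2, hγ, ?_, ?_⟩
              · rw [natDegree_neg]; exact hdeg2
              · exact neg_ne_zero.2 hne2
              · intro t
                have h3 := hid t
                simp only [eval_neg, eval_mul, eval_sub, eval_C, eval_X]
                nlinarith [h3]
              · intro t ht
                simp only [eval_neg, eval_mul, eval_sub, eval_C, eval_X]
                nlinarith [ht.1.1, ht.1.2]
            · obtain ⟨F, γ, hF, hF2, hγ, hid⟩ := pair_mixed hab h2 h1
              refine ⟨-((X - C r) * (X - C r')), F, γ, a, (neg_dvd).2 hdvd2, ?_, ?_,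
                hF, hF2, hγ, ?_, ?_⟩
              · rw [natDegree_neg]; exact hdeg2
              · exact neg_ne_zero.2 hne2
              · intro t
                have h3 := hid t
                simp only [eval_neg, eval_mul, eval_sub, eval_C, eval_X]
                nlinarith [h3]
              · intro t ht
                simp only [eval_neg, eval_mul, eval_sub, eval_C, eval_X]
                nlinarith [ht.1.1, ht.1.2]
            · obtain ⟨F, γ, hF, hF2, hγ, hid⟩ := pair_rr hab h1 h2
              refine ⟨(X - C r) * (X - C r'), F, γ, a, hdvd2, hdeg2, hne2, hF, hF2, hγ, ?_, ?_⟩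
              · intro t
                simpa only [eval_mul, eval_sub, eval_C, eval_X] using hid t
              · intro t ht
                simp only [eval_mul, eval_sub, eval_C, eval_X]
                exact mul_pos_of_neg_of_neg (by linarith [ht.1.2]) (by linarith [ht.1.2])
        · push_neg at hroot
          obtain ⟨α, β, hβ, hdvdQ⟩ := quad_factor (by omega) hroot
          have hQdeg : (X ^ 2 - C (2 * α) * X + C (α ^ 2 + β ^ 2) : ℝ[X]).natDegree = 2 := by
            compute_degree!
          refine ⟨X ^ 2 - C (2 * α) * X + C (α ^ 2 + β ^ 2),
            (X - C α) ^ 2 + (C β) ^ 2, 0, a, hdvdQ, hQdeg, ?_,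
            sos_add (isSOS_sq _) (isSOS_sq _), ?_, le_refl 0, ?_, ?_⟩
          · intro h; rw [h] at hQdeg; simp at hQdeg
          · apply (natDegree_add_le _ _).trans
            simp only [max_le_iff]
            constructor
            · rw [natDegree_pow, natDegree_X_sub_C]
            · exact deg_aux3 _
          · intro t
            simp only [eval_add, eval_sub, eval_mul, eval_pow, eval_C, eval_X]
            ring
          · intro t _
            simp only [eval_add, eval_sub, eval_mul, eval_pow, eval_C, eval_X]
            nlinarith [sq_nonneg (t - α), pow_two_pos_of_ne_zero hβ]
      -- combination step
      obtain ⟨p₁, hfac⟩ := hdvd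
      have hp₁0 : p₁ ≠ 0 := by rintro rfl; rw [mul_zero] at hfac; exact hp0 hfac
      have hdeg : p.natDegree = 2 + p₁.natDegree := by
        rw [hfac, natDegree_mul hMne hp₁0, hM2]
      have hp₁pos : ∀ t ∈ Icc a b, 0 ≤ p₁.eval t :=
        quotient_nonneg hab r₀ (fun t ht => hfac ▸ hpos t ht) hMpos
      have hp₁even : Even p₁.natDegree := by
        rcases heven with ⟨k, hk⟩
        rw [Nat.even_iff]; omega
      have hlt : p₁.natDegree < d := by omega
      obtain ⟨f₁, g₁, hf₁, hg₁, hf₁d, hg₁d, hid₁⟩ :=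
        ih p₁.natDegree hlt p₁ le_rfl hp₁even hp₁pos
      have hwdeg : (((X - C a) * (C b - X)) ^ 2 : ℝ[X]).natDegree ≤ 4 := by
        apply (natDegree_pow _ _).le.trans
        have h5 : ((X - C a) * (C b - X) : ℝ[X]).natDegree ≤ 2 := by
          apply (natDegree_mul_le).trans
          have h6 : (C b - X : ℝ[X]).natDegree ≤ 1 :=
            (natDegree_sub_le _ _).trans (by simp)
          have h7 : (X - C a : ℝ[X]).natDegree ≤ 1 := le_of_eq (natDegree_X_sub_C a)
          omega
        omega
      refine ⟨F * f₁ + C γ * ((X - C a) * (C b - X)) ^ 2 * g₁,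
        C γ * f₁ + F * g₁, ?_, ?_, ?_, ?_, ?_⟩
      · exact sos_add (sos_mul hF hf₁)
          (sos_mul (sos_mul (isSOS_C hγ) (isSOS_sq _)) hg₁)
      · exact sos_add (sos_mul (isSOS_C hγ) hf₁) (sos_mul hF hg₁)
      · apply (natDegree_add_le _ _).trans
        simp only [max_le_iff]
        constructor
        · have := natDegree_mul_le (p := F) (q := f₁)
          omega
        · rcases hg₁d with rfl | hb
          · simp
          · have h8 := natDegree_mul_le (p := C γ * ((X - C a) * (C b - X)) ^ 2) (q := g₁)
            have h9 := natDegree_mul_le (p := C γ) (q := ((X - C a) * (C b - X)) ^ 2)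
            have h10 : (C γ : ℝ[X]).natDegree = 0 := natDegree_C γ
            omega
      · right
        have hA := natDegree_mul_le (p := C γ) (q := f₁)
        have h10 : (C γ : ℝ[X]).natDegree = 0 := natDegree_C γ
        have hsum := natDegree_add_le (C γ * f₁) (F * g₁)
        have hB : (F * g₁).natDegree ≤ p₁.natDegree := by
          rcases hg₁d with rfl | hb
          · simp
          · have := natDegree_mul_le (p := F) (q := g₁)
            omega
        have hmax : (C γ * f₁ + F * g₁).natDegree ≤ p₁.natDegree :=
          hsum.trans (max_le (by omega) hB)
        omega
      · intro t
        have hMt := hid t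
        have hp₁t := hid₁ t
        have hpt : p.eval t = M.eval t * p₁.eval t := by rw [hfac, eval_mul]
        simp only [eval_add, eval_mul, eval_pow, eval_sub, eval_C, eval_X]
        rw [hpt, hMt, hp₁t]
        ring

end SOSAux

theorem stmt1 (a b : ℝ) (hab : a < b) (p : Polynomial ℝ) (heven : Even p.natDegree) :
    (∀ t ∈ Set.Icc a b, 0 ≤ p.eval t) ↔
      ∃ f g : Polynomial ℝ, IsSOS f ∧ IsSOS g ∧
        f.natDegree ≤ p.natDegree ∧ g.natDegree ≤ p.natDegree - 2 ∧
        ∀ t : ℝ, p.eval t = f.eval t + (t - a) * (b - t) * g.eval t := by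
  constructor
  · intro hpos
    obtain ⟨f, g, hf, hg, hfd, hgd, hident⟩ :=
      SOSAux.main hab p.natDegree p le_rfl heven hpos
    refine ⟨f, g, hf, hg, hfd, ?_, hident⟩
    rcases hgd with rfl | hb
    · simp
    · omega
  · rintro ⟨f, g, hf, hg, _, _, hident⟩ t ht
    rw [hident t]
    have h1 := SOSAux.sos_eval_nonneg hf t
    have h2 := SOSAux.sos_eval_nonneg hg t
    have h3 : 0 ≤ (t - a) * (b - t) := mul_nonneg (by linarith [ht.1]) (by linarith [ht.2])
    nlinarith
end

section
/- Let p be a polynomial strictly positive on [a,b] with a < b. Then there exists an integer q such that p(x) = Σ_{i+j ≤ q} c_{ij} (b−x)^i (x−a)^j with all coefficients c_{ij} ≥ 0. -/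
open Polynomial Finset

/-- A real polynomial is `Good` if some power of `1+X` times it has nonnegative coefficients. -/
def Good (g : Polynomial ℝ) : Prop :=
  ∃ N : ℕ, ∀ k, 0 ≤ ((1 + X : Polynomial ℝ) ^ N * g).coeff k

lemma good_of_coeff_nonneg {g : Polynomial ℝ} (h : ∀ k, 0 ≤ g.coeff k) : Good g :=
  ⟨0, by simpa using h⟩

lemma good_mul {g h : Polynomial ℝ} (hg : Good g) (hh : Good h) : Good (g * h) := by
  obtain ⟨N₁, h₁⟩ := hg
  obtain ⟨N₂, h₂⟩ := hh
  refine ⟨N₁ + N₂, fun k => ?_⟩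
  have e : (1 + X : Polynomial ℝ) ^ (N₁ + N₂) * (g * h)
      = ((1 + X) ^ N₁ * g) * ((1 + X) ^ N₂ * h) := by ring
  rw [e, coeff_mul]
  exact Finset.sum_nonneg fun x _ => mul_nonneg (h₁ x.1) (h₂ x.2)

lemma amgm {A B C β γ : ℝ} (hA : 0 ≤ A) (hB : 0 ≤ B) (hC : 0 ≤ C) (hγ : 0 < γ)
    (h : β ^ 2 * B ^ 2 ≤ 4 * γ * (A * C)) : 0 ≤ A + β * B + γ * C := by
  by_contra hc
  push_neg at hc
  have h0 : 0 ≤ A + γ * C := by positivity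
  have h1 : A + γ * C < -β * B := by linarith
  have h2 : (A + γ * C) ^ 2 < (-β * B) ^ 2 := by nlinarith
  nlinarith [sq_nonneg (A - γ * C)]

lemma choose_ratio (N m : ℕ) (h : m + 1 ≤ N) :
    (N.choose (m + 1) : ℝ) * (m + 1) = (N.choose m : ℝ) * ((N : ℝ) - m) := by
  have h0 := Nat.choose_succ_right_eq N m
  have hm : m ≤ N := by omega
  have h1 : ((N.choose (m + 1) * (m + 1) : ℕ) : ℝ) = ((N.choose m * (N - m) : ℕ) : ℝ) := by
    exact_mod_cast congrArg (fun t : ℕ => (t : ℝ)) h0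
  push_cast [Nat.cast_sub hm] at h1
  linarith

set_option maxHeartbeats 1000000 in
lemma quad_choose (β γ : ℝ) (hβ : β < 0) (hγ : 0 < γ) (hd : β ^ 2 < 4 * γ) :
    ∃ N : ℕ, (0 ≤ β + γ * N) ∧
      ∀ m : ℕ, 0 ≤ (N.choose m : ℝ) + β * (N.choose (m + 1) : ℝ)
        + γ * (N.choose (m + 2) : ℝ) := by
  -- find K with β²K² < 4γ(K-1)², then N big enough
  have hs : (0:ℝ) < -β := by linarith
  obtain ⟨K, hK3, hKsq⟩ : ∃ K : ℕ, (3:ℝ) ≤ (K:ℝ) ∧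
      β ^ 2 * (K : ℝ) ^ 2 < 4 * γ * ((K : ℝ) - 1) ^ 2 := by
    have hγ' : (0:ℝ) ≤ γ := hγ.le
    set t : ℝ := 2 * Real.sqrt γ with ht_def
    have ht : 0 < t := by positivity
    have ht2 : t ^ 2 = 4 * γ := by rw [ht_def, mul_pow, Real.sq_sqrt hγ']; ring
    have hst : -β < t := by nlinarith
    obtain ⟨K₁, hK₁⟩ := exists_nat_gt (t / (t - -β))
    refine ⟨K₁ + 3, by push_cast; linarith [Nat.cast_nonneg (α := ℝ) K₁], ?_⟩
    have hc : (K₁ : ℝ) ≤ ((K₁ + 3 : ℕ) : ℝ) := by push_cast; linarith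
    have h1 : t / (t - -β) < ((K₁ + 3 : ℕ) : ℝ) := by linarith
    have h2 : t < ((K₁ + 3 : ℕ) : ℝ) * (t - -β) := by
      rw [div_lt_iff₀ (by linarith : (0:ℝ) < t - -β)] at h1
      linarith
    have hKmain : -β * ((K₁+3:ℕ) : ℝ) < t * (((K₁+3:ℕ) : ℝ) - 1) := by nlinarith
    have h0 : 0 ≤ -β * ((K₁+3:ℕ) : ℝ) := by positivity
    nlinarith
  obtain ⟨N, hNK, hf1, hf2, hf4⟩ : ∃ N : ℕ, K + 2 ≤ N ∧
      (-β) * (K : ℝ) ≤ γ * ((N : ℝ) + 1 - (K : ℝ)) ∧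
      (-β) * (K : ℝ) ≤ (N : ℝ) + 1 - (K : ℝ) ∧
      (-β) ≤ γ * (N : ℝ) ∧ (-β) ≤ (N : ℝ) := by
    obtain ⟨N₀, hN₀⟩ := exists_nat_gt ((-β) * (K:ℝ) / γ + (-β) * (K:ℝ) + 2 * (K:ℝ) + 2)
    have hcan : γ * ((-β) * (K:ℝ) / γ) = (-β) * (K:ℝ) := by field_simp
    have hK0 : (0:ℝ) ≤ (K:ℝ) := Nat.cast_nonneg K
    have hq0 : (0:ℝ) ≤ (-β) * (K:ℝ) / γ := by positivity
    have hq1 : (0:ℝ) ≤ (-β) * (K:ℝ) := by positivity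
    have hKb : (-β) ≤ (-β) * (K:ℝ) := by nlinarith
    refine ⟨N₀, ?_, ?_, ?_, ?_, ?_⟩
    · have h3 : 2 * (K:ℝ) + 2 < (N₀ : ℝ) := by linarith
      have : ((K + 2 : ℕ) : ℝ) ≤ (N₀ : ℝ) := by push_cast; linarith
      exact_mod_cast this
    · have h9 := mul_le_mul_of_nonneg_left hN₀.le hγ.le
      have h13 : (0:ℝ) ≤ γ * (K:ℝ) := by positivity
      nlinarith [h9, hcan, h13, mul_nonneg hγ.le hq1]
    · linarith
    · have h9 := mul_le_mul_of_nonneg_left hN₀.le hγ.le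
      have h13 : (0:ℝ) ≤ γ * (K:ℝ) := by positivity
      linarith [h9, hcan, h13, hKb, mul_nonneg hγ.le hq1]
    · linarith [hN₀, hq0, hq1, hKb, hK0]
  obtain ⟨hf4a, hf4b⟩ := hf4
  have f1 := hf1
  have f2 := hf2
  have f4 : -β ≤ (N:ℝ) := hf4b
  refine ⟨N, by linarith, ?_⟩
  intro m
  have hA : (0:ℝ) ≤ (N.choose m : ℝ) := by positivity
  have hB : (0:ℝ) ≤ (N.choose (m+1) : ℝ) := by positivity
  have hC : (0:ℝ) ≤ (N.choose (m+2) : ℝ) := by positivity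
  by_cases hm2 : m + 2 ≤ N
  · have hr2 := choose_ratio N (m + 1) hm2
    have e21 : m + 1 + 1 = m + 2 := rfl
    rw [e21] at hr2
    have hr1 := choose_ratio N m (by omega)
    push_cast at hr1 hr2
    have hAe : (N.choose m : ℝ) * ((N:ℝ) - (m:ℝ)) = (N.choose (m+1) : ℝ) * ((m:ℝ)+1) := by
      linarith [hr1]
    have hCe : (N.choose (m+2) : ℝ) * ((m:ℝ)+2) = (N.choose (m+1) : ℝ) * ((N:ℝ)-(m:ℝ)-1) := by
      linarith [hr2]
    have hNm : (0:ℝ) < (N:ℝ) - (m:ℝ) := by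
      have : (m:ℝ) + 2 ≤ (N:ℝ) := by exact_mod_cast hm2
      linarith
    by_cases hlow : m + 2 ≤ K
    · -- low case : β * B + γ * C ≥ 0
      have hm2K : ((m:ℝ) + 2) ≤ (K : ℝ) := by exact_mod_cast hlow
      have k0 := mul_le_mul_of_nonneg_left hm2K hs.le
      have k1 := mul_le_mul_of_nonneg_left (show (N:ℝ) + 1 - (K:ℝ) ≤ (N:ℝ) - ((m:ℝ)+1) by linarith) hγ.le
      have key : (-β) * ((m:ℝ) + 2) ≤ γ * ((N:ℝ) - ((m:ℝ) + 1)) := by linarith [f1]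
      have h6 := mul_le_mul_of_nonneg_left key hB
      have hCe4 : γ * ((N.choose (m+2) : ℝ) * ((m:ℝ)+2))
          = γ * ((N.choose (m+1) : ℝ) * ((N:ℝ)-(m:ℝ)-1)) := by rw [hCe]
      have h7' : 0 ≤ (β * (N.choose (m+1) : ℝ) + γ * (N.choose (m+2) : ℝ)) * ((m:ℝ)+2) := by
        nlinarith [hCe4, h6]
      have hpos : (0:ℝ) < (m:ℝ) + 2 := by positivity
      have h7 : 0 ≤ β * (N.choose (m+1) : ℝ) + γ * (N.choose (m+2) : ℝ) :=
        le_of_mul_le_mul_right (by linarith [h7']) hpos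
      linarith
    · by_cases hhigh : m + K ≤ N
      · -- middle case: AM-GM
        push_neg at hlow
        have hKm : (K : ℝ) ≤ (m : ℝ) + 2 := by
          have : K ≤ m + 2 := by omega
          exact_mod_cast this
        have hmKN : (m : ℝ) + (K : ℝ) ≤ (N : ℝ) := by exact_mod_cast hhigh
        have hK1 : (0:ℝ) ≤ (K:ℝ) - 1 := by linarith
        have e1 : ((K:ℝ) - 1) * ((m:ℝ) + 2) ≤ (K:ℝ) * ((m:ℝ) + 1) := by nlinarith [hKm]
        have e2 : ((K:ℝ) - 1) * ((N:ℝ) - (m:ℝ)) ≤ (K:ℝ) * ((N:ℝ) - (m:ℝ) - 1) := by nlinarith [hmKN]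
        have hNm1 : (0:ℝ) ≤ (N:ℝ) - (m:ℝ) - 1 := by linarith
        have k1 := mul_le_mul e1 e2 (mul_nonneg hK1 hNm.le) (by positivity)
        have k2 := mul_le_mul_of_nonneg_right hKsq.le
          (mul_nonneg hNm.le (by positivity : (0:ℝ) ≤ (m:ℝ)+2))
        have k3 := mul_le_mul_of_nonneg_left k1 (by positivity : (0:ℝ) ≤ 4*γ)
        have hK2 : (0:ℝ) < (K:ℝ)^2 := by
          have : (0:ℝ) < (K:ℝ) := by linarith
          positivity
        have key : β^2 * (((N:ℝ) - (m:ℝ)) * ((m:ℝ)+2))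
            ≤ 4*γ*(((m:ℝ)+1) * ((N:ℝ)-(m:ℝ)-1)) := by
          apply le_of_mul_le_mul_right ?_ hK2
          nlinarith [k2, k3]
        apply amgm hA hB hC hγ
        have hprod : ((N.choose m : ℝ) * ((N:ℝ)-(m:ℝ))) * ((N.choose (m+2) : ℝ) * ((m:ℝ)+2))
            = ((N.choose (m+1) : ℝ) * ((m:ℝ)+1)) * ((N.choose (m+1) : ℝ) * ((N:ℝ)-(m:ℝ)-1)) := by
          rw [hAe, hCe]
        have hprod4 : 4*γ*(((N.choose m : ℝ) * ((N:ℝ)-(m:ℝ))) * ((N.choose (m+2) : ℝ) * ((m:ℝ)+2)))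
            = 4*γ*(((N.choose (m+1) : ℝ) * ((m:ℝ)+1)) * ((N.choose (m+1) : ℝ) * ((N:ℝ)-(m:ℝ)-1))) := by
          rw [hprod]
        have hfinal := mul_le_mul_of_nonneg_right key (sq_nonneg ((N.choose (m+1):ℝ)))
        have hp2 : (0:ℝ) < ((N:ℝ)-(m:ℝ)) * ((m:ℝ)+2) := by positivity
        apply le_of_mul_le_mul_right ?_ hp2
        nlinarith [hfinal, hprod4]
      · -- high case: A + β B ≥ 0
        push_neg at hhigh
        have hNmK : (N:ℝ) - (m:ℝ) ≤ (K:ℝ) := by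
          have h' : N ≤ m + K := by omega
          have h'' : (N:ℝ) ≤ (m:ℝ) + (K:ℝ) := by exact_mod_cast h'
          linarith
        have k0 := mul_le_mul_of_nonneg_left hNmK hs.le
        have hm1 : (N:ℝ) + 1 - (K:ℝ) ≤ (m:ℝ) + 1 := by linarith
        have key : (-β) * ((N:ℝ) - (m:ℝ)) ≤ (m:ℝ) + 1 := by linarith [k0, f2]
        have h6 := mul_le_mul_of_nonneg_left key hB
        have h7' : 0 ≤ ((N.choose m : ℝ) + β * (N.choose (m+1) : ℝ)) * ((N:ℝ)-(m:ℝ)) := by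
          nlinarith [hAe, h6]
        
        have h7 : 0 ≤ (N.choose m : ℝ) + β * (N.choose (m+1) : ℝ) :=
          le_of_mul_le_mul_right (by linarith [h7']) hNm
        have := mul_nonneg hγ.le hC
        linarith
  · by_cases hm1 : m + 1 ≤ N
    · -- N = m+1
      have hNe : N = m + 1 := by omega
      have hCz : N.choose (m+2) = 0 := Nat.choose_eq_zero_of_lt (by omega)
      have hAv : N.choose m = m + 1 := by rw [hNe]; exact Nat.choose_succ_self_right m
      have hBv : N.choose (m+1) = 1 := by rw [hNe]; exact Nat.choose_self (m+1)
      rw [hCz, hAv, hBv]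
      push_cast
      have hNm1 : (N:ℝ) = (m:ℝ) + 1 := by exact_mod_cast congrArg (fun t : ℕ => (t:ℝ)) hNe
      have : -β ≤ (m:ℝ) + 1 := by rw [← hNm1]; exact f4
      linarith
    · have hBz : N.choose (m+1) = 0 := Nat.choose_eq_zero_of_lt (by omega)
      have hCz : N.choose (m+2) = 0 := Nat.choose_eq_zero_of_lt (by omega)
      rw [hBz, hCz]; push_cast; linarith

lemma good_quadratic (β γ : ℝ) (hγ : 0 < γ) (hd : β ^ 2 < 4 * γ) :
    Good (X ^ 2 + C β * X + C γ) := by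
  rcases le_or_gt 0 β with hβ | hβ
  · apply good_of_coeff_nonneg
    intro k
    simp only [coeff_add, coeff_X_pow, coeff_C_mul, coeff_X, coeff_C]
    split_ifs <;> simp_all <;> positivity
  · obtain ⟨N, hN1, hN⟩ := quad_choose β γ hβ hγ hd
    refine ⟨N, fun k => ?_⟩
    have hexp : (1 + X : Polynomial ℝ) ^ N * (X ^ 2 + C β * X + C γ)
        = ((1 + X) ^ N * X ^ 2) + C β * ((1 + X) ^ N * X ^ 1) + C γ * (1 + X) ^ N := by
      ring
    rw [hexp, coeff_add, coeff_add, coeff_C_mul, coeff_C_mul,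
      coeff_mul_X_pow', coeff_mul_X_pow']
    match k with
    | 0 =>
      simp [coeff_one_add_X_pow]
      positivity
    | 1 =>
      simp [coeff_one_add_X_pow]
      simpa [Nat.choose_one_right, mul_comm] using hN1
    | (m+2) =>
      have h2 : 2 ≤ m + 2 := by omega
      have h1 : 1 ≤ m + 2 := by omega
      rw [if_pos h2, if_pos h1]
      simp only [coeff_one_add_X_pow]
      have e1 : m + 2 - 2 = m := by omega
      have e2 : m + 2 - 1 = m + 1 := by omega
      rw [e1, e2]
      have := hN m
      linarith

lemma good_of_pos (n : ℕ) :
    ∀ g : Polynomial ℝ, g.natDegree ≤ n → (∀ t : ℝ, 0 ≤ t → 0 < g.eval t) → Good g := by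
  induction n with
  | zero =>
    intro g hdeg hpos
    have hg : g = C (g.coeff 0) := eq_C_of_natDegree_eq_zero (Nat.le_zero.mp hdeg)
    have h0 : 0 < g.coeff 0 := by
      have := hpos 0 le_rfl
      rwa [hg, eval_C] at this
    apply good_of_coeff_nonneg
    intro k
    rw [hg, coeff_C]
    split_ifs <;> [linarith; rfl]
  | succ n ih =>
    intro g hdeg hpos
    by_cases h0 : g.natDegree = 0
    · have hg : g = C (g.coeff 0) := eq_C_of_natDegree_eq_zero h0
      have hc : 0 < g.coeff 0 := by
        have := hpos 0 le_rfl
        rwa [hg, eval_C] at this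
      apply good_of_coeff_nonneg
      intro k
      rw [hg, coeff_C]
      split_ifs <;> [linarith; rfl]
    · have hgne : g ≠ 0 := fun h => by simpa [h] using hpos 0 le_rfl
      have hgnu : ¬IsUnit g := by
        intro hu
        exact h0 (natDegree_eq_zero_of_isUnit hu)
      obtain ⟨w, hwirr, hwdvd⟩ := WfDvdMonoid.exists_irreducible_factor hgnu hgne
      have hwne : w ≠ 0 := hwirr.ne_zero
      have hlcne : w.leadingCoeff ≠ 0 := leadingCoeff_ne_zero.mpr hwne
      set q : Polynomial ℝ := w * C w.leadingCoeff⁻¹ with hq_def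
      have hqmonic : q.Monic := monic_mul_leadingCoeff_inv hwne
      have hqne : q ≠ 0 := hqmonic.ne_zero
      have hqw : q * C w.leadingCoeff = w := by
        rw [hq_def, mul_assoc, ← C_mul, inv_mul_cancel₀ hlcne, C_1, mul_one]
      have hqdvd : q ∣ g := dvd_trans (Dvd.intro _ hqw) hwdvd
      have hqirr : Irreducible q := by
        have hu : IsUnit (C w.leadingCoeff⁻¹ : Polynomial ℝ) :=
          isUnit_C.mpr (isUnit_iff_ne_zero.mpr (inv_ne_zero hlcne))
        have hassoc : Associated w q := ⟨hu.unit, by rw [IsUnit.unit_spec]⟩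
        exact hassoc.irreducible hwirr
      have hqdeg : q.natDegree ≤ 2 := hqirr.natDegree_le_two
      have hqdeg1 : 1 ≤ q.natDegree := hqirr.natDegree_pos
      obtain ⟨h, hgh⟩ := hqdvd
      have hhne : h ≠ 0 := fun hh => hgne (by rw [hgh, hh, mul_zero])
      have hdegsum : g.natDegree = q.natDegree + h.natDegree := by
        rw [hgh, natDegree_mul hqne hhne]
      interval_cases hqd : q.natDegree
      · -- linear
        have hqeq : q = X + C (q.coeff 0) := hqmonic.eq_X_add_C hqd
        have hroot : g.eval (-(q.coeff 0)) = 0 := by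
          rw [hgh, eval_mul, hqeq]
          simp
        have hr : 0 < q.coeff 0 := by
          by_contra hle
          push_neg at hle
          have := hpos (-(q.coeff 0)) (by linarith)
          rw [hroot] at this
          exact lt_irrefl 0 this
        have hqpos : ∀ t : ℝ, 0 ≤ t → 0 < q.eval t := by
          intro t ht
          rw [hqeq]; simp; linarith
        have hhpos : ∀ t : ℝ, 0 ≤ t → 0 < h.eval t := by
          intro t ht
          have hg' := hpos t ht
          rw [hgh, eval_mul] at hg'
          nlinarith [hqpos t ht]
        have hhdeg : h.natDegree ≤ n := by omega
        have goodq : Good q := by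
          apply good_of_coeff_nonneg
          intro k
          rw [hqeq]
          match k with
          | 0 => simp; linarith
          | 1 => simp
          | (j+2) => simp [coeff_X, coeff_C]
        exact hgh ▸ good_mul goodq (ih h hhdeg hhpos)
      · -- quadratic
        set β : ℝ := q.coeff 1 with hβ_def
        set γ : ℝ := q.coeff 0 with hγ_def
        have hqeq : q = X ^ 2 + C β * X + C γ := by
          have hsum := as_sum_range' q 3 (by omega)
          have hc2 : q.coeff 2 = 1 := by
            have := hqmonic.coeff_natDegree
            rwa [hqd] at this
          rw [Finset.sum_range_succ, Finset.sum_range_succ, Finset.sum_range_one] at hsum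
          rw [hsum, hc2, ← C_mul_X_pow_eq_monomial, ← C_mul_X_pow_eq_monomial,
            ← C_mul_X_pow_eq_monomial]
          simp only [← hβ_def, ← hγ_def, map_one, one_mul, pow_zero, pow_one]
          ring
        have hnoroot : ∀ x : ℝ, q.eval x ≠ 0 := by
          intro x hx
          obtain ⟨u, hu⟩ := dvd_iff_isRoot.mpr hx
          rcases hqirr.isUnit_or_isUnit hu with h1 | h2
          · exact not_isUnit_of_degree_pos _ (by rw [degree_X_sub_C]; norm_num) h1
          · have hune : u ≠ 0 := by
              intro h'
              rw [h', mul_zero] at hu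
              exact hqne hu
            have : q.natDegree = 1 + u.natDegree := by
              rw [hu, natDegree_mul (X_sub_C_ne_zero x) hune, natDegree_X_sub_C]
            rw [natDegree_eq_zero_of_isUnit h2] at this
            omega
        have hdisc : β ^ 2 < 4 * γ := by
          by_contra hle
          push_neg at hle
          have : ∃ s : ℝ, discrim 1 β γ = s * s := by
            refine ⟨Real.sqrt (β ^ 2 - 4 * γ), ?_⟩
            rw [discrim, Real.mul_self_sqrt (by linarith : (0:ℝ) ≤ β ^ 2 - 4 * γ)]
            ring
          obtain ⟨x, hx⟩ := exists_quadratic_eq_zero one_ne_zero this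
          apply hnoroot x
          rw [hqeq]
          simp only [eval_add, eval_mul, eval_pow, eval_X, eval_C]
          nlinarith [hx]
        have hγpos : 0 < γ := by nlinarith [sq_nonneg β]
        have hqpos : ∀ t : ℝ, 0 < q.eval t := by
          intro t
          rw [hqeq]
          simp only [eval_add, eval_mul, eval_pow, eval_X, eval_C]
          nlinarith [sq_nonneg (t + β / 2)]
        have hhpos : ∀ t : ℝ, 0 ≤ t → 0 < h.eval t := by
          intro t ht
          have hg' := hpos t ht
          rw [hgh, eval_mul] at hg'
          nlinarith [hqpos t]
        have hhdeg : h.natDegree ≤ n := by omega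
        exact hgh ▸ good_mul (hqeq ▸ good_quadratic β γ hγpos hdisc) (ih h hhdeg hhpos)

theorem stmt14 (a b : ℝ) (hab : a < b) (p : Polynomial ℝ)
    (hpos : ∀ x ∈ Set.Icc a b, 0 < p.eval x) :
    ∃ (q : ℕ) (c : ℕ → ℕ → ℝ), (∀ i j, 0 ≤ c i j) ∧
      ∀ x : ℝ, p.eval x =
        ∑ i ∈ range (q + 1), ∑ j ∈ range (q + 1 - i),
          c i j * (b - x) ^ i * (x - a) ^ j := by
  have hba : (0:ℝ) < b - a := by linarith
  set d : ℕ := p.natDegree with hd_def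
  set g : Polynomial ℝ :=
    ∑ i ∈ range (d + 1), C (p.coeff i) * (C a + C b * X) ^ i * (1 + X) ^ (d - i) with hg_def
  -- the key Goursat identity
  have hkey : ∀ x : ℝ, x ≠ b →
      g.eval ((x - a) / (b - x)) * (b - x) ^ d = (b - a) ^ d * p.eval x := by
    intro x hx
    have hbx : b - x ≠ 0 := sub_ne_zero.mpr (Ne.symm hx)
    rw [hg_def, eval_finset_sum, Finset.sum_mul,
      eval_eq_sum_range (x := x), Finset.mul_sum]
    apply Finset.sum_congr rfl
    intro i hi
    have hi' : i ≤ d := by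
      have := Finset.mem_range.mp hi; omega
    simp only [eval_mul, eval_pow, eval_add, eval_C, eval_X, eval_one]
    have h1 : (a + b * ((x - a) / (b - x))) * (b - x) = (b - a) * x := by
      field_simp; ring
    have h2 : (1 + (x - a) / (b - x)) * (b - x) = b - a := by
      field_simp; ring
    have hsplit : (b - x) ^ d = (b - x) ^ i * (b - x) ^ (d - i) := by
      rw [← pow_add]; congr 1; omega
    have hd2 : (b - a) ^ i * (b - a) ^ (d - i) = (b - a) ^ d := by
      rw [← pow_add]; congr 1; omega
    calc p.coeff i * (a + b * ((x - a) / (b - x))) ^ i * (1 + (x - a) / (b - x)) ^ (d - i)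
          * (b - x) ^ d
        = p.coeff i * ((a + b * ((x - a) / (b - x))) * (b - x)) ^ i
          * ((1 + (x - a) / (b - x)) * (b - x)) ^ (d - i) := by
          rw [hsplit, mul_pow, mul_pow]; ring
      _ = p.coeff i * ((b - a) * x) ^ i * (b - a) ^ (d - i) := by rw [h1, h2]
      _ = (b - a) ^ d * (p.coeff i * x ^ i) := by
          rw [mul_pow, ← hd2]; ring
  -- positivity of g on [0, ∞)
  have hgpos : ∀ t : ℝ, 0 ≤ t → 0 < g.eval t := by
    intro t ht
    have h1t : (0:ℝ) < 1 + t := by linarith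
    set x : ℝ := (a + b * t) / (1 + t) with hx_def
    have hbx : b - x = (b - a) / (1 + t) := by
      rw [hx_def]; field_simp; ring
    have hxa : x - a = t * (b - a) / (1 + t) := by
      rw [hx_def]; field_simp; ring
    have hbx0 : 0 < b - x := by rw [hbx]; positivity
    have hxb : x ≠ b := by intro h; rw [h] at hbx0; linarith
    have hxI : x ∈ Set.Icc a b := by
      constructor
      · have : 0 ≤ x - a := by rw [hxa]; positivity
        linarith
      · linarith
    have ht' : (x - a) / (b - x) = t := by
      rw [hxa, hbx]
      rw [div_div_div_eq]
      field_simp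
    have hk := hkey x hxb
    rw [ht'] at hk
    have hp : 0 < p.eval x := hpos x hxI
    have h3 : 0 < (b - x) ^ d := pow_pos hbx0 d
    have h4 : 0 < (b - a) ^ d * p.eval x := mul_pos (pow_pos hba d) hp
    by_contra hle
    push_neg at hle
    nlinarith
  obtain ⟨N, hN⟩ := good_of_pos g.natDegree g le_rfl hgpos
  set q : ℕ := N + d with hq_def
  set e : ℕ → ℝ := fun j => ((1 + X : Polynomial ℝ) ^ N * g).coeff j with he_def
  have he0 : ∀ j, 0 ≤ e j := hN
  -- degree bound
  have hgdeg : g.natDegree ≤ d := by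
    rw [hg_def]
    apply natDegree_sum_le_of_forall_le
    intro i hi
    have hi' : i ≤ d := by have := Finset.mem_range.mp hi; omega
    calc (C (p.coeff i) * (C a + C b * X) ^ i * (1 + X) ^ (d - i)).natDegree
        ≤ (C (p.coeff i) * (C a + C b * X) ^ i).natDegree + ((1 + X : Polynomial ℝ) ^ (d - i)).natDegree :=
          natDegree_mul_le
      _ ≤ (C (p.coeff i)).natDegree + ((C a + C b * X : Polynomial ℝ) ^ i).natDegree
          + ((1 + X : Polynomial ℝ) ^ (d - i)).natDegree := by
          gcongr; exact natDegree_mul_le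
      _ ≤ 0 + i * 1 + (d - i) * 1 := by
          gcongr
          · exact le_of_eq (natDegree_C _)
          · exact natDegree_pow_le_of_le i (by
              calc (C a + C b * X : Polynomial ℝ).natDegree
                  ≤ max (C a).natDegree (C b * X : Polynomial ℝ).natDegree := natDegree_add_le _ _
                _ ≤ 1 := by
                    apply max_le
                    · simp [natDegree_C]
                    · exact (natDegree_C_mul_le b X).trans (by simp))
          · exact natDegree_pow_le_of_le (d - i) (by
              rw [add_comm, ← C_1]
              exact le_of_eq (natDegree_X_add_C 1))
      _ ≤ d := by omega
  have hprodeg : ((1 + X : Polynomial ℝ) ^ N * g).natDegree < q + 1 := by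
    have h1 : ((1 + X : Polynomial ℝ) ^ N).natDegree ≤ N := by
      have hx1 : (1 + X : Polynomial ℝ).natDegree = 1 := by
        rw [add_comm, ← C_1]; exact natDegree_X_add_C 1
      calc ((1 + X : Polynomial ℝ) ^ N).natDegree
          ≤ N * (1 + X : Polynomial ℝ).natDegree := natDegree_pow_le
        _ = N := by rw [hx1, mul_one]
    calc ((1 + X : Polynomial ℝ) ^ N * g).natDegree
        ≤ ((1 + X : Polynomial ℝ) ^ N).natDegree + g.natDegree := natDegree_mul_le
      _ ≤ N + d := by omega
      _ < q + 1 := by omega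
  have heval : ∀ t : ℝ, ((1 + X : Polynomial ℝ) ^ N * g).eval t
      = ∑ j ∈ range (q + 1), e j * t ^ j := fun t => eval_eq_sum_range' hprodeg t
  -- E function
  set E : ℝ → ℝ := fun x => ∑ j ∈ range (q + 1), e j * (b - x) ^ (q - j) * (x - a) ^ j
    with hE_def
  have hE : ∀ x : ℝ, x ≠ b → E x = (b - a) ^ q * p.eval x := by
    intro x hx
    have hbx : b - x ≠ 0 := sub_ne_zero.mpr (Ne.symm hx)
    set t : ℝ := (x - a) / (b - x) with ht_def
    have htx : t * (b - x) = x - a := div_mul_cancel₀ _ hbx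
    have h2 : (1 + t) * (b - x) = b - a := by
      rw [ht_def]; field_simp; ring
    have hterm : ∀ j ∈ range (q + 1),
        e j * (b - x) ^ (q - j) * (x - a) ^ j = e j * t ^ j * (b - x) ^ q := by
      intro j hj
      have hj' : j ≤ q := by have := Finset.mem_range.mp hj; omega
      rw [← htx, mul_pow]
      have : (b - x) ^ (q - j) * (b - x) ^ j = (b - x) ^ q := by
        rw [← pow_add]; congr 1; omega
      calc e j * (b - x) ^ (q - j) * (t ^ j * (b - x) ^ j)
          = e j * t ^ j * ((b - x) ^ (q - j) * (b - x) ^ j) := by ring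
        _ = e j * t ^ j * (b - x) ^ q := by rw [this]
    rw [hE_def]
    simp only []
    rw [Finset.sum_congr rfl hterm, ← Finset.sum_mul, ← heval t]
    rw [eval_mul, eval_pow, eval_add, eval_one, eval_X]
    have hk := hkey x hx
    rw [← ht_def] at hk
    have hsplit : (b - x) ^ q = (b - x) ^ N * (b - x) ^ d := by
      rw [← pow_add]
    have h1N : (1 + t) ^ N * (b - x) ^ N = (b - a) ^ N := by
      rw [← mul_pow, h2]
    calc (1 + t) ^ N * g.eval t * (b - x) ^ q
        = (1 + t) ^ N * (b - x) ^ N * (g.eval t * (b - x) ^ d) := by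
          rw [hsplit]; ring
      _ = (b - a) ^ N * ((b - a) ^ d * p.eval x) := by rw [h1N, hk]
      _ = (b - a) ^ q * p.eval x := by rw [hq_def, pow_add]; ring
  -- extend to all x via polynomial identity
  have hEall : ∀ x : ℝ, E x = (b - a) ^ q * p.eval x := by
    set P1 : Polynomial ℝ :=
      ∑ j ∈ range (q + 1), C (e j) * (C b - X) ^ (q - j) * (X - C a) ^ j with hP1_def
    have hP1e : ∀ x : ℝ, P1.eval x = E x := by
      intro x
      rw [hP1_def, eval_finset_sum]
      apply Finset.sum_congr rfl
      intro j _
      simp [he_def]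
    have hPeq : C ((b - a) ^ q) * p = P1 := by
      apply eq_of_infinite_eval_eq
      apply Set.Infinite.mono (s := Set.Iio b)
      · intro x hx
        have hxb : x ≠ b := ne_of_lt hx
        simp only [Set.mem_setOf_eq, eval_mul, eval_C]
        rw [hP1e, hE x hxb]
      · exact Set.Iio_infinite b
    intro x
    rw [← hP1e]
    have := congrArg (eval x) hPeq
    simp only [eval_mul, eval_C] at this
    linarith [this]
  -- final assembly
  refine ⟨q, fun i j => (if i + j = q then e j else 0) * ((b - a) ^ q)⁻¹, ?_, ?_⟩
  · intro i j
    apply mul_nonneg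
    · split_ifs
      · exact he0 j
      · exact le_refl 0
    · positivity
  · intro x
    have hinner : ∀ i ∈ range (q + 1),
        ∑ j ∈ range (q + 1 - i), (if i + j = q then e j else 0) * ((b - a) ^ q)⁻¹
          * (b - x) ^ i * (x - a) ^ j
        = e (q - i) * ((b - a) ^ q)⁻¹ * (b - x) ^ i * (x - a) ^ (q - i) := by
      intro i hi
      have hi' : i ≤ q := by have := Finset.mem_range.mp hi; omega
      rw [Finset.sum_eq_single_of_mem (q - i) (Finset.mem_range.mpr (by omega))]
      · rw [if_pos (by omega)]
      · intro j hj hne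
        rw [if_neg (by have := Finset.mem_range.mp hj; omega), zero_mul, zero_mul, zero_mul]
    rw [Finset.sum_congr rfl hinner]
    have hreflect : ∑ i ∈ range (q + 1),
        e (q - i) * ((b - a) ^ q)⁻¹ * (b - x) ^ i * (x - a) ^ (q - i)
        = ∑ j ∈ range (q + 1), e j * ((b - a) ^ q)⁻¹ * (b - x) ^ (q - j) * (x - a) ^ j := by
      rw [← Finset.sum_range_reflect (fun j => e j * ((b - a) ^ q)⁻¹ * (b - x) ^ (q - j)
        * (x - a) ^ j) (q + 1)]
      apply Finset.sum_congr rfl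
      intro i hi
      have hi' : i ≤ q := by have := Finset.mem_range.mp hi; omega
      have h1 : q + 1 - 1 - i = q - i := by omega
      have h2 : q - (q - i) = i := by omega
      rw [h1, h2]
    rw [hreflect]
    have hsum : ∑ j ∈ range (q + 1), e j * ((b - a) ^ q)⁻¹ * (b - x) ^ (q - j) * (x - a) ^ j
        = ((b - a) ^ q)⁻¹ * E x := by
      rw [hE_def, Finset.mul_sum]
      apply Finset.sum_congr rfl
      intro j _
      ring
    rw [hsum, hEall x]
    rw [← mul_assoc, inv_mul_cancel₀ (by positivity : ((b - a) ^ q : ℝ) ≠ 0), one_mul]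
end

section
/- For the PDHG iteration on a convex problem min_x f(x) + g(Lx) with L linear, if a saddle point of the Lagrangian exists and the step sizes α, β > 0 satisfy αβ‖L‖² < 1, then the primal-dual hybrid gradient iterates x^{k+1} = prox_{αf}(x^k − αLᵀλ^k), λ^{k+1} = prox_{βg*}(λ^k + βL(2x^{k+1} − x^k)) converge to a saddle point. -/
open scoped Topology

/-- Euclidean space shortcut. -/
abbrev Euc (n : ℕ) := EuclideanSpace ℝ (Fin n)

/-- `p` is the proximal point of `h` with parameter `α` at `z`. -/
def IsProxPt {X : Type*} [NormedAddCommGroup X] (h : X → EReal) (α : ℝ) (z p : X) : Prop :=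
  ∀ x : X, h p + (((‖p - z‖ ^ 2) / (2 * α) : ℝ) : EReal)
    ≤ h x + (((‖x - z‖ ^ 2) / (2 * α) : ℝ) : EReal)

/-- Fenchel conjugate of `g`. -/
noncomputable def fenchel {m : ℕ} (g : Euc m → EReal) (lam : Euc m) : EReal :=
  ⨆ y : Euc m, ((inner ℝ lam y : ℝ) : EReal) - g y

section AuxReal

lemma PDHG.small_t (A C : ℝ) (hC : 0 ≤ C) (hAC : ∀ t : ℝ, t ∈ Set.Ioc (0:ℝ) 1 → A ≤ t * C) :
    A ≤ 0 := by
  by_contra h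
  push_neg at h
  have ht : (min 1 (A / (2 * (C + 1)))) ∈ Set.Ioc (0:ℝ) 1 := by
    constructor
    · exact lt_min one_pos (div_pos h (by linarith))
    · exact min_le_left _ _
  have := hAC _ ht
  have h2 : min 1 (A / (2 * (C + 1))) ≤ A / (2 * (C + 1)) := min_le_right _ _
  have h3 : A ≤ (A / (2 * (C + 1))) * C := le_trans this (by nlinarith)
  rw [div_mul_eq_mul_div, le_div_iff₀ (by linarith)] at h3
  nlinarith

lemma PDHG.coe_sub_top (a : ℝ) : (a : EReal) - (⊤ : EReal) = ⊥ := rfl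

lemma PDHG.sub_coe_ne_bot (a : EReal) (ha : a ≠ ⊥) (d : ℝ) : a - (d : EReal) ≠ ⊥ := by
  induction a using EReal.rec with
  | bot => exact absurd rfl ha
  | coe r => rw [← EReal.coe_sub]; exact EReal.coe_ne_bot _
  | top => rw [EReal.top_sub_coe]; simp

lemma PDHG.add_coe_ne_bot (a : EReal) (ha : a ≠ ⊥) (d : ℝ) : a + (d : EReal) ≠ ⊥ := by
  induction a using EReal.rec with
  | bot => exact absurd rfl ha
  | coe r => rw [← EReal.coe_add]; exact EReal.coe_ne_bot _
  | top => rw [EReal.top_add_coe]; simp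

lemma PDHG.antitone_tendsto_zero {K : ℕ → ℝ} (hA : Antitone K) (h0 : ∀ k, 0 ≤ K k)
    {φ : ℕ → ℕ} (hφ : StrictMono φ)
    (h : Filter.Tendsto (fun j => K (φ j)) Filter.atTop (𝓝 0)) :
    Filter.Tendsto K Filter.atTop (𝓝 0) := by
  rw [Metric.tendsto_atTop] at h ⊢
  intro ε hε
  obtain ⟨N, hN⟩ := h ε hε
  refine ⟨φ N, fun k hk => ?_⟩
  have h1 := hN N (le_refl N)
  have h2 : K k ≤ K (φ N) := hA hk
  rw [Real.dist_eq] at h1 ⊢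
  rw [abs_lt] at h1 ⊢
  constructor
  · have := h0 k; linarith
  · linarith

end AuxReal

section AuxProx

variable {X : Type*} [NormedAddCommGroup X] [InnerProductSpace ℝ X]

lemma PDHG.prox_ne_top {h : X → EReal} {α : ℝ} {z p u : X}
    (hp : IsProxPt h α z p) (hu : h u ≠ ⊤) : h p ≠ ⊤ := by
  intro htop
  have h1 : h u + (((‖u - z‖ ^ 2) / (2 * α) : ℝ) : EReal) < ⊤ :=
    EReal.add_lt_top hu (EReal.coe_ne_top _)
  have h2 := lt_of_le_of_lt (hp u) h1
  rw [htop, EReal.top_add_coe] at h2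
  exact lt_irrefl _ h2

lemma PDHG.prox_real_ineq {h : X → EReal} {α : ℝ} {z p : X}
    (hbot : ∀ x, h x ≠ ⊥)
    (hp : IsProxPt h α z p) {u : X} (hu : h u ≠ ⊤) :
    (h p).toReal + ‖p - z‖ ^ 2 / (2 * α) ≤ (h u).toReal + ‖u - z‖ ^ 2 / (2 * α) := by
  have hpT : h p ≠ ⊤ := PDHG.prox_ne_top hp hu
  have hineq := hp u
  have hfin1 : h p + (((‖p - z‖ ^ 2) / (2 * α) : ℝ) : EReal) ≠ ⊥ := by
    rw [← EReal.coe_toReal hpT (hbot p)]; exact_mod_cast EReal.coe_ne_bot _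
  have hfin2 : h u + (((‖u - z‖ ^ 2) / (2 * α) : ℝ) : EReal) ≠ ⊤ := by
    rw [← EReal.coe_toReal hu (hbot u)]; exact_mod_cast EReal.coe_ne_top _
  have hreal := EReal.toReal_le_toReal hineq hfin1 hfin2
  rwa [EReal.toReal_add hpT (hbot p) (EReal.coe_ne_top _) (EReal.coe_ne_bot _),
      EReal.toReal_add hu (hbot u) (EReal.coe_ne_top _) (EReal.coe_ne_bot _),
      EReal.toReal_coe, EReal.toReal_coe] at hreal

lemma PDHG.epi_convex_ineq {h : X → EReal}
    (hcvx : Convex ℝ {q : X × ℝ | h q.1 ≤ (q.2 : EReal)})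
    {p x : X} (hpT : h p ≠ ⊤) (hpB : h p ≠ ⊥) (hxT : h x ≠ ⊤) (hxB : h x ≠ ⊥)
    {t : ℝ} (ht0 : 0 ≤ t) (ht1 : t ≤ 1) :
    h ((1 - t) • p + t • x) ≤ (((1 - t) * (h p).toReal + t * (h x).toReal : ℝ) : EReal) := by
  have h1 : (p, (h p).toReal) ∈ {q : X × ℝ | h q.1 ≤ (q.2 : EReal)} := by
    simp [Set.mem_setOf_eq, EReal.coe_toReal hpT hpB]
  have h2 : (x, (h x).toReal) ∈ {q : X × ℝ | h q.1 ≤ (q.2 : EReal)} := by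
    simp [Set.mem_setOf_eq, EReal.coe_toReal hxT hxB]
  have := hcvx h1 h2 (by linarith : (0:ℝ) ≤ 1 - t) ht0 (by ring)
  simpa [Prod.smul_mk, Prod.mk_add_mk, smul_eq_mul] using this

lemma PDHG.prox_vi {h : X → EReal} {α : ℝ} (hα : 0 < α) {z p : X}
    (hcvx : Convex ℝ {q : X × ℝ | h q.1 ≤ (q.2 : EReal)})
    (hbot : ∀ x, h x ≠ ⊥)
    (hp : IsProxPt h α z p) (hpT : h p ≠ ⊤)
    {x : X} (hxT : h x ≠ ⊤) :
    (h p).toReal + (inner ℝ (z - p) (x - p) : ℝ) / α ≤ (h x).toReal := by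
  set Hp := (h p).toReal with hHp
  set Hx := (h x).toReal with hHx
  set ip := (inner ℝ (z - p) (x - p) : ℝ) with hipdef
  set q := ‖x - p‖ ^ 2 with hqdef
  have key : ∀ t : ℝ, t ∈ Set.Ioc (0:ℝ) 1 →
      Hp + ip / α - Hx ≤ t * (q / (2 * α)) := by
    intro t ht
    obtain ⟨ht0, ht1⟩ := ht
    set xt := (1 - t) • p + t • x with hxt
    have hcomb := PDHG.epi_convex_ineq hcvx hpT (hbot p) hxT (hbot x) (le_of_lt ht0) ht1
    have hxtB := hbot xt
    have hxtT : h xt ≠ ⊤ := by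
      intro hc
      rw [hc] at hcomb
      exact (EReal.coe_ne_top _) (top_le_iff.mp hcomb)
    have hineq := hp xt
    have hfin1 : h p + (((‖p - z‖ ^ 2) / (2 * α) : ℝ) : EReal) ≠ ⊥ := by
      rw [← EReal.coe_toReal hpT (hbot p)]; exact_mod_cast EReal.coe_ne_bot _
    have hfin2 : h xt + (((‖xt - z‖ ^ 2) / (2 * α) : ℝ) : EReal) ≠ ⊤ := by
      rw [← EReal.coe_toReal hxtT hxtB]; exact_mod_cast EReal.coe_ne_top _
    have hreal := EReal.toReal_le_toReal hineq hfin1 hfin2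
    rw [EReal.toReal_add hpT (hbot p) (EReal.coe_ne_top _) (EReal.coe_ne_bot _),
        EReal.toReal_add hxtT hxtB (EReal.coe_ne_top _) (EReal.coe_ne_bot _),
        EReal.toReal_coe, EReal.toReal_coe] at hreal
    have hcombr : (h xt).toReal ≤ (1 - t) * Hp + t * Hx := by
      have := EReal.toReal_le_toReal hcomb hxtB (EReal.coe_ne_top _)
      rwa [EReal.toReal_coe] at this
    have hexp : ‖xt - z‖ ^ 2 = ‖p - z‖ ^ 2 + 2 * (t * (-ip)) + t ^ 2 * q := by
      have hxtz : xt - z = (p - z) + t • (x - p) := by rw [hxt]; module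
      have hip2 : (inner ℝ (p - z) (x - p) : ℝ) = -ip := by
        rw [hipdef, ← inner_neg_left]; congr 1; abel
      rw [hxtz, norm_add_sq_real, real_inner_smul_right, norm_smul, Real.norm_eq_abs,
        mul_pow, sq_abs, hip2, hqdef]
    rw [hexp] at hreal
    have e1 : (‖p - z‖ ^ 2 + 2 * (t * (-ip)) + t ^ 2 * q) / (2 * α)
        = ‖p - z‖ ^ 2 / (2 * α) - t * (ip / α) + t * (t * (q / (2 * α))) := by
      field_simp
      ring
    rw [e1] at hreal
    have key2 : t * (Hp + ip / α - Hx) ≤ t * (t * (q / (2 * α))) := by nlinarith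
    exact (mul_le_mul_iff_right₀ ht0).mp key2
  have := PDHG.small_t _ _ (by positivity) key
  linarith

lemma PDHG.prox_limit {h : X → EReal} {α : ℝ}
    (hclosed : IsClosed {q : X × ℝ | h q.1 ≤ (q.2 : EReal)}) (hbot : ∀ x, h x ≠ ⊥)
    {z p : ℕ → X} {z' p' : X}
    (hz : Filter.Tendsto z Filter.atTop (𝓝 z'))
    (hp : Filter.Tendsto p Filter.atTop (𝓝 p'))
    (hprox : ∀ j, IsProxPt h α (z j) (p j)) : IsProxPt h α z' p' := by
  intro u
  by_cases hu : h u = ⊤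
  · rw [hu, EReal.top_add_coe]; exact le_top
  · set r : ℕ → ℝ := fun j => (h u).toReal + ‖u - z j‖ ^ 2 / (2 * α) - ‖p j - z j‖ ^ 2 / (2 * α)
      with hrdef
    have hmem : ∀ j, (p j, r j) ∈ {q : X × ℝ | h q.1 ≤ (q.2 : EReal)} := by
      intro j
      have h1 := PDHG.prox_real_ineq hbot (hprox j) hu
      have hpT : h (p j) ≠ ⊤ := PDHG.prox_ne_top (hprox j) hu
      simp only [Set.mem_setOf_eq]
      rw [← EReal.coe_toReal hpT (hbot (p j)), EReal.coe_le_coe_iff, hrdef]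
      dsimp only
      linarith
    set rl : ℝ := (h u).toReal + ‖u - z'‖ ^ 2 / (2 * α) - ‖p' - z'‖ ^ 2 / (2 * α) with hrl
    have hr : Filter.Tendsto r Filter.atTop (𝓝 rl) := by
      apply Filter.Tendsto.sub
      apply Filter.Tendsto.add tendsto_const_nhds
      · exact (((tendsto_const_nhds.sub hz).norm.pow 2).div_const _)
      · exact (((hp.sub hz).norm.pow 2).div_const _)
    have hlim : (p', rl) ∈ {q : X × ℝ | h q.1 ≤ (q.2 : EReal)} :=
      hclosed.mem_of_tendsto (hp.prodMk_nhds hr) (Filter.Eventually.of_forall hmem)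
    have hple : h p' ≤ ((rl : ℝ) : EReal) := hlim
    calc h p' + (((‖p' - z'‖ ^ 2) / (2 * α) : ℝ) : EReal)
        ≤ ((rl : ℝ) : EReal) + (((‖p' - z'‖ ^ 2) / (2 * α) : ℝ) : EReal) :=
          add_le_add_left hple _
      _ = (((h u).toReal + ‖u - z'‖ ^ 2 / (2 * α) : ℝ) : EReal) := by
          rw [← EReal.coe_add]; congr 1; rw [hrl]; ring
      _ = h u + (((‖u - z'‖ ^ 2) / (2 * α) : ℝ) : EReal) := by
          rw [EReal.coe_add, EReal.coe_toReal hu (hbot u)]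
      _ ≤ _ := le_refl _

end AuxProx

section AuxAlg

variable {E : Type*} [NormedAddCommGroup E] [InnerProductSpace ℝ E] [CompleteSpace E]
variable {F : Type*} [NormedAddCommGroup F] [InnerProductSpace ℝ F] [CompleteSpace F]

lemma PDHG.mono_step (L : E →L[ℝ] F) {α β : ℝ} (hα : 0 < α) (hβ : 0 < β)
    (x0 x1 xs : E) (l0 l1 ls : F) (Fx1 Fxs Gl1 Gls : ℝ)
    (hVI1 : Fx1 + (inner ℝ ((x0 - α • (ContinuousLinearMap.adjoint L) l0) - x1) (xs - x1) : ℝ) / α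
      ≤ Fxs)
    (hVI2 : Gl1 + (inner ℝ ((l0 + β • L ((2:ℝ) • x1 - x0)) - l1) (ls - l1) : ℝ) / β ≤ Gls)
    (hS1 : Fxs + (inner ℝ (L xs) ls : ℝ) ≤ Fx1 + (inner ℝ (L x1) ls : ℝ))
    (hS2 : (inner ℝ (L xs) l1 : ℝ) - Gl1 ≤ (inner ℝ (L xs) ls : ℝ) - Gls) :
    ‖x1 - xs‖ ^ 2 / α + ‖l1 - ls‖ ^ 2 / β - 2 * (inner ℝ (L (x1 - xs)) (l1 - ls) : ℝ)
      + (‖x1 - x0‖ ^ 2 / α + ‖l1 - l0‖ ^ 2 / β - 2 * (inner ℝ (L (x1 - x0)) (l1 - l0) : ℝ))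
      ≤ ‖x0 - xs‖ ^ 2 / α + ‖l0 - ls‖ ^ 2 / β - 2 * (inner ℝ (L (x0 - xs)) (l0 - ls) : ℝ) := by
  have e1 : (inner ℝ ((x0 - α • (ContinuousLinearMap.adjoint L) l0) - x1) (xs - x1) : ℝ)
      = (inner ℝ (x0 - x1) (xs - x1) : ℝ) - α * (inner ℝ l0 (L (xs - x1)) : ℝ) := by
    have : (x0 - α • (ContinuousLinearMap.adjoint L) l0) - x1
        = (x0 - x1) - α • (ContinuousLinearMap.adjoint L) l0 := by abel
    rw [this, inner_sub_left, real_inner_smul_left, ContinuousLinearMap.adjoint_inner_left]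
  have e2 : (inner ℝ ((l0 + β • L ((2:ℝ) • x1 - x0)) - l1) (ls - l1) : ℝ)
      = (inner ℝ (l0 - l1) (ls - l1) : ℝ) + β * (inner ℝ (L ((2:ℝ) • x1 - x0)) (ls - l1) : ℝ) := by
    have : (l0 + β • L ((2:ℝ) • x1 - x0)) - l1 = (l0 - l1) + β • L ((2:ℝ) • x1 - x0) := by abel
    rw [this, inner_add_left, real_inner_smul_left]
  rw [e1] at hVI1; rw [e2] at hVI2
  have hd1 : ((inner ℝ (x0 - x1) (xs - x1) : ℝ) - α * (inner ℝ l0 (L (xs - x1)) : ℝ)) / α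
      = (inner ℝ (x0 - x1) (xs - x1) : ℝ) / α - (inner ℝ l0 (L (xs - x1)) : ℝ) := by
    field_simp
  have hd2 : ((inner ℝ (l0 - l1) (ls - l1) : ℝ) + β * (inner ℝ (L ((2:ℝ) • x1 - x0)) (ls - l1) : ℝ)) / β
      = (inner ℝ (l0 - l1) (ls - l1) : ℝ) / β + (inner ℝ (L ((2:ℝ) • x1 - x0)) (ls - l1) : ℝ) := by
    field_simp
  rw [hd1] at hVI1; rw [hd2] at hVI2
  have hx : ‖x1 - xs‖ ^ 2 / α + ‖x1 - x0‖ ^ 2 / α - ‖x0 - xs‖ ^ 2 / α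
      = 2 * ((inner ℝ (x0 - x1) (xs - x1) : ℝ) / α) := by
    have h1 : ‖x1 - xs‖ ^ 2 + ‖x1 - x0‖ ^ 2 - ‖x0 - xs‖ ^ 2
        = 2 * (inner ℝ (x1 - xs) (x1 - x0) : ℝ) := by
      have t := norm_sub_sq_real (x1 - xs) (x1 - x0)
      rw [show (x1 - xs) - (x1 - x0) = x0 - xs by abel] at t
      linarith
    have h2 : (inner ℝ (x0 - x1) (xs - x1) : ℝ) = (inner ℝ (x1 - xs) (x1 - x0) : ℝ) := by
      rw [show x0 - x1 = -(x1 - x0) by abel, show xs - x1 = -(x1 - xs) by abel,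
        inner_neg_neg, real_inner_comm]
    rw [← add_div, ← sub_div, h1, h2]
    ring
  have hl : ‖l1 - ls‖ ^ 2 / β + ‖l1 - l0‖ ^ 2 / β - ‖l0 - ls‖ ^ 2 / β
      = 2 * ((inner ℝ (l0 - l1) (ls - l1) : ℝ) / β) := by
    have h1 : ‖l1 - ls‖ ^ 2 + ‖l1 - l0‖ ^ 2 - ‖l0 - ls‖ ^ 2
        = 2 * (inner ℝ (l1 - ls) (l1 - l0) : ℝ) := by
      have t := norm_sub_sq_real (l1 - ls) (l1 - l0)
      rw [show (l1 - ls) - (l1 - l0) = l0 - ls by abel] at t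
      linarith
    have h2 : (inner ℝ (l0 - l1) (ls - l1) : ℝ) = (inner ℝ (l1 - ls) (l1 - l0) : ℝ) := by
      rw [show l0 - l1 = -(l1 - l0) by abel, show ls - l1 = -(l1 - ls) by abel,
        inner_neg_neg, real_inner_comm]
    rw [← add_div, ← sub_div, h1, h2]
    ring
  simp only [map_sub, map_add, map_smul, inner_sub_left, inner_sub_right, inner_add_left,
    inner_add_right, real_inner_smul_left, real_inner_smul_right, smul_eq_mul]
    at hVI1 hVI2 hx hl ⊢
  linarith [hx, hl, real_inner_comm (l0 : F) (L x1), real_inner_comm (l0 : F) (L xs),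
    real_inner_comm (l0 : F) (L x0), real_inner_comm (l1 : F) (L x1),
    real_inner_comm (l1 : F) (L xs), real_inner_comm (l1 : F) (L x0),
    real_inner_comm (ls : F) (L x1), real_inner_comm (ls : F) (L xs),
    real_inner_comm (ls : F) (L x0)]

lemma PDHG.H_lower (L : E →L[ℝ] F) {α β : ℝ} (hα : 0 < α) (hβ : 0 < β)
    (hstep : α * β * ‖L‖ ^ 2 < 1) :
    ∃ δ1 δ2 : ℝ, 0 < δ1 ∧ 0 < δ2 ∧ ∀ (u : E) (v : F),
      δ1 * ‖u‖ ^ 2 + δ2 * ‖v‖ ^ 2 ≤ ‖u‖ ^ 2 / α + ‖v‖ ^ 2 / β - 2 * (inner ℝ (L u) v : ℝ) := by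
  set lc : ℝ := (β * ‖L‖ ^ 2 + 1 / α) / 2 with hlc
  have hL0 : (0:ℝ) ≤ ‖L‖ := norm_nonneg _
  have hba : β * ‖L‖ ^ 2 < 1 / α := by
    rw [lt_div_iff₀ hα]; nlinarith
  have hlcpos : 0 < lc := by
    rw [hlc]; have : 0 < 1 / α := by positivity
    nlinarith
  refine ⟨1 / α - lc, 1 / β - ‖L‖ ^ 2 / lc, ?_, ?_, ?_⟩
  · rw [hlc]; linarith
  · rw [sub_pos, div_lt_iff₀ hlcpos, hlc]
    rw [div_mul_eq_mul_div, lt_div_iff₀ hβ] at *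
    nlinarith
  · intro u v
    have hip : (inner ℝ (L u) v : ℝ) ≤ ‖L‖ * ‖u‖ * ‖v‖ := by
      calc (inner ℝ (L u) v : ℝ) ≤ ‖L u‖ * ‖v‖ := real_inner_le_norm _ _
        _ ≤ ‖L‖ * ‖u‖ * ‖v‖ := by
            have := L.le_opNorm u
            nlinarith [norm_nonneg v]
    have hsq : (0:ℝ) ≤ (lc * ‖u‖ - ‖L‖ * ‖v‖) ^ 2 := sq_nonneg _
    have h2 : 2 * (inner ℝ (L u) v : ℝ) * lc ≤ lc * lc * ‖u‖ ^ 2 + ‖L‖ ^ 2 * ‖v‖ ^ 2 := by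
      nlinarith [norm_nonneg u, norm_nonneg v]
    have h3 : 2 * (inner ℝ (L u) v : ℝ) ≤ lc * ‖u‖ ^ 2 + (‖L‖ ^ 2 / lc) * ‖v‖ ^ 2 := by
      rw [← sub_nonneg]
      have e : lc * ‖u‖ ^ 2 + (‖L‖ ^ 2 / lc) * ‖v‖ ^ 2 - 2 * (inner ℝ (L u) v : ℝ)
          = (lc * lc * ‖u‖ ^ 2 + ‖L‖ ^ 2 * ‖v‖ ^ 2 - 2 * (inner ℝ (L u) v : ℝ) * lc) / lc := by
        field_simp
      rw [e]
      apply div_nonneg _ hlcpos.le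
      linarith
    have e1 : ‖u‖ ^ 2 / α = (1/α) * ‖u‖ ^ 2 := by ring
    have e2 : ‖v‖ ^ 2 / β = (1/β) * ‖v‖ ^ 2 := by ring
    rw [e1, e2]
    nlinarith

end AuxAlg

section AuxFenchel

variable {m : ℕ}

lemma PDHG.fenchel_ne_bot (g : Euc m → EReal) (hg : ∃ y, g y ≠ ⊤) (hb : ∀ y, g y ≠ ⊥)
    (v : Euc m) : fenchel g v ≠ ⊥ := by
  obtain ⟨y0, hy0⟩ := hg
  have h1 : ((inner ℝ v y0 : ℝ) : EReal) - g y0 ≤ fenchel g v :=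
    le_iSup (fun y : Euc m => ((inner ℝ v y : ℝ) : EReal) - g y) y0
  rw [← EReal.coe_toReal hy0 (hb y0), ← EReal.coe_sub] at h1
  intro hc
  rw [hc] at h1
  exact (EReal.coe_ne_bot _) (le_bot_iff.mp h1)

lemma PDHG.fenchel_epi_eq (g : Euc m → EReal) :
    {q : Euc m × ℝ | fenchel g q.1 ≤ (q.2 : EReal)}
      = ⋂ y : Euc m, {q : Euc m × ℝ | ((inner ℝ q.1 y : ℝ) : EReal) - g y ≤ (q.2 : EReal)} := by
  ext q
  simp [fenchel, iSup_le_iff, Set.mem_iInter]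

lemma PDHG.fenchel_slice (g : Euc m → EReal) (hb : ∀ y, g y ≠ ⊥) (y : Euc m) (hy : g y ≠ ⊤) :
    {q : Euc m × ℝ | ((inner ℝ q.1 y : ℝ) : EReal) - g y ≤ (q.2 : EReal)}
      = {q : Euc m × ℝ | (inner ℝ q.1 y : ℝ) - q.2 ≤ (g y).toReal} := by
  ext q
  simp only [Set.mem_setOf_eq]
  rw [← EReal.coe_toReal hy (hb y), ← EReal.coe_sub, EReal.coe_le_coe_iff, EReal.toReal_coe]
  constructor <;> intro h <;> linarith

lemma PDHG.fenchel_epi_convex (g : Euc m → EReal) (hb : ∀ y, g y ≠ ⊥) :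
    Convex ℝ {q : Euc m × ℝ | fenchel g q.1 ≤ (q.2 : EReal)} := by
  rw [PDHG.fenchel_epi_eq]
  apply convex_iInter
  intro y
  by_cases hy : g y = ⊤
  · have : {q : Euc m × ℝ | ((inner ℝ q.1 y : ℝ) : EReal) - g y ≤ (q.2 : EReal)} = Set.univ := by
      ext q; simp [hy, PDHG.coe_sub_top]
    rw [this]; exact convex_univ
  · rw [PDHG.fenchel_slice g hb y hy]
    exact convex_halfSpace_le (⟨fun a b => by
        simp only [Prod.fst_add, Prod.snd_add, inner_add_left]; ring,
      fun c a => by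
        simp only [Prod.smul_fst, Prod.smul_snd, real_inner_smul_left, smul_eq_mul]; ring⟩ :
        IsLinearMap ℝ fun q : Euc m × ℝ => (inner ℝ q.1 y : ℝ) - q.2) _

lemma PDHG.fenchel_epi_closed (g : Euc m → EReal) (hb : ∀ y, g y ≠ ⊥) :
    IsClosed {q : Euc m × ℝ | fenchel g q.1 ≤ (q.2 : EReal)} := by
  rw [PDHG.fenchel_epi_eq]
  apply isClosed_iInter
  intro y
  by_cases hy : g y = ⊤
  · have : {q : Euc m × ℝ | ((inner ℝ q.1 y : ℝ) : EReal) - g y ≤ (q.2 : EReal)} = Set.univ := by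
      ext q; simp [hy, PDHG.coe_sub_top]
    rw [this]; exact isClosed_univ
  · rw [PDHG.fenchel_slice g hb y hy]
    have hcont : Continuous fun q : Euc m × ℝ => (inner ℝ q.1 y : ℝ) - q.2 :=
      (continuous_fst.inner continuous_const).sub continuous_snd
    exact isClosed_le hcont continuous_const

lemma PDHG.exists_fenchel_ne_top (g : Euc m → EReal) (hg : ∃ y, g y ≠ ⊤) (hb : ∀ y, g y ≠ ⊥)
    (hcvx : Convex ℝ {q : Euc m × ℝ | g q.1 ≤ (q.2 : EReal)})
    (hclosed : IsClosed {q : Euc m × ℝ | g q.1 ≤ (q.2 : EReal)}) :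
    ∃ v : Euc m, fenchel g v ≠ ⊤ := by
  obtain ⟨y0, hy0⟩ := hg
  set c : ℝ := (g y0).toReal with hc
  have hmem0 : (y0, c) ∈ {q : Euc m × ℝ | g q.1 ≤ (q.2 : EReal)} := by
    simp [Set.mem_setOf_eq, hc, EReal.coe_toReal hy0 (hb y0)]
  have hnot : (y0, c - 1) ∉ {q : Euc m × ℝ | g q.1 ≤ (q.2 : EReal)} := by
    simp only [Set.mem_setOf_eq]
    rw [← EReal.coe_toReal hy0 (hb y0), EReal.coe_le_coe_iff]
    push_neg
    linarith
  obtain ⟨φ, u, hφ0, hφ⟩ := geometric_hahn_banach_point_closed hcvx hclosed hnot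
  set s : ℝ := φ (0, 1) with hs
  have hsplit : ∀ (y : Euc m) (t : ℝ), φ (y, t) = φ (y, 0) + t * s := by
    intro y t
    have e : (y, t) = (y, (0:ℝ)) + t • ((0 : Euc m), (1:ℝ)) := by
      simp [Prod.ext_iff]
    rw [e, map_add, map_smul, smul_eq_mul, hs]
  have hspos : 0 < s := by
    have h1 := hφ _ hmem0
    rw [hsplit y0 c] at h1
    rw [hsplit y0 (c - 1)] at hφ0
    nlinarith
  refine ⟨(-(1/s)) • (InnerProductSpace.toDual ℝ (Euc m)).symm
    (φ.comp (ContinuousLinearMap.inl ℝ (Euc m) ℝ)), ?_⟩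
  set v := (-(1/s)) • (InnerProductSpace.toDual ℝ (Euc m)).symm
    (φ.comp (ContinuousLinearMap.inl ℝ (Euc m) ℝ)) with hv
  have hvin : ∀ y : Euc m, (inner ℝ v y : ℝ) = (-(1/s)) * φ (y, 0) := by
    intro y
    rw [hv, real_inner_smul_left, InnerProductSpace.toDual_symm_apply]
    simp
  have hbound : fenchel g v ≤ ((-(u/s) : ℝ) : EReal) := by
    rw [fenchel]
    apply iSup_le
    intro y
    by_cases hy : g y = ⊤
    · rw [hy, PDHG.coe_sub_top]; exact bot_le
    · rw [← EReal.coe_toReal hy (hb y), ← EReal.coe_sub, EReal.coe_le_coe_iff]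
      have hmem : (y, (g y).toReal) ∈ {q : Euc m × ℝ | g q.1 ≤ (q.2 : EReal)} := by
        simp [Set.mem_setOf_eq, EReal.coe_toReal hy (hb y)]
      have h1 := hφ _ hmem
      rw [hsplit y ((g y).toReal)] at h1
      rw [hvin y]
      rw [le_neg, div_le_iff₀ hspos]
      have hss : (1/s) * s = 1 := by field_simp
      have e : -(-(1 / s) * φ (y, 0) - (g y).toReal) * s
          = φ (y, 0) * ((1/s) * s) + (g y).toReal * s := by ring
      rw [e, hss]
      linarith
  intro hc2
  rw [hc2] at hbound
  exact (EReal.coe_ne_top _) (top_le_iff.mp hbound)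

end AuxFenchel

set_option maxHeartbeats 2000000 in
theorem stmt17 (n m : ℕ) (f : Euc n → EReal) (g : Euc m → EReal)
    (hf_proper : (∃ x, f x ≠ ⊤) ∧ ∀ x, f x ≠ ⊥)
    (hg_proper : (∃ y, g y ≠ ⊤) ∧ ∀ y, g y ≠ ⊥)
    (hf_cvx : Convex ℝ {p : Euc n × ℝ | f p.1 ≤ (p.2 : EReal)})
    (hf_closed : IsClosed {p : Euc n × ℝ | f p.1 ≤ (p.2 : EReal)})
    (hg_cvx : Convex ℝ {p : Euc m × ℝ | g p.1 ≤ (p.2 : EReal)})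
    (hg_closed : IsClosed {p : Euc m × ℝ | g p.1 ≤ (p.2 : EReal)})
    (L : Euc n →L[ℝ] Euc m)
    (Lagr : Euc n → Euc m → EReal)
    (hLagr : ∀ x lam, Lagr x lam = f x + ((inner ℝ (L x) lam : ℝ) : EReal) - fenchel g lam)
    (hsaddle : ∃ (x' : Euc n) (lam' : Euc m), ∀ (x : Euc n) (lam : Euc m),
      Lagr x' lam ≤ Lagr x' lam' ∧ Lagr x' lam' ≤ Lagr x lam')
    (α β : ℝ) (hα : 0 < α) (hβ : 0 < β) (hstep : α * β * ‖L‖ ^ 2 < 1)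
    (x : ℕ → Euc n) (lam : ℕ → Euc m)
    (hxit : ∀ k, IsProxPt f α (x k - α • (ContinuousLinearMap.adjoint L) (lam k)) (x (k + 1)))
    (hlamit : ∀ k, IsProxPt (fenchel g) β
      (lam k + β • L ((2 : ℝ) • x (k + 1) - x k)) (lam (k + 1))) :
    ∃ (xs : Euc n) (lams : Euc m),
      (∀ (x' : Euc n) (lam' : Euc m),
        Lagr xs lam' ≤ Lagr xs lams ∧ Lagr xs lams ≤ Lagr x' lams) ∧
      Filter.Tendsto x Filter.atTop (𝓝 xs) ∧
      Filter.Tendsto lam Filter.atTop (𝓝 lams) := by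
  classical
  obtain ⟨x0f, hx0f⟩ := hf_proper.1
  have hfB := hf_proper.2
  have hgB : ∀ v, fenchel g v ≠ ⊥ := PDHG.fenchel_ne_bot g hg_proper.1 hg_proper.2
  obtain ⟨v0, hv0⟩ := PDHG.exists_fenchel_ne_top g hg_proper.1 hg_proper.2 hg_cvx hg_closed
  have hGcvx := PDHG.fenchel_epi_convex g hg_proper.2
  have hGclosed := PDHG.fenchel_epi_closed g hg_proper.2
  have hfT : ∀ k, f (x (k+1)) ≠ ⊤ := fun k => PDHG.prox_ne_top (hxit k) hx0f
  have hGT : ∀ k, fenchel g (lam (k+1)) ≠ ⊤ := fun k => PDHG.prox_ne_top (hlamit k) hv0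
  have hfT1 : f (x 1) ≠ ⊤ := hfT 0
  have hGT1 : fenchel g (lam 1) ≠ ⊤ := hGT 0
  -- Lagrangian as a real number when both parts are finite
  have lagr_coe : ∀ (a : Euc n) (b : Euc m), f a ≠ ⊤ → fenchel g b ≠ ⊤ →
      Lagr a b = (((f a).toReal + (inner ℝ (L a) b : ℝ) - (fenchel g b).toReal : ℝ) : EReal) := by
    intro a b ha hb
    rw [hLagr, EReal.coe_sub, EReal.coe_add, EReal.coe_toReal ha (hfB a),
      EReal.coe_toReal hb (hgB b)]
  have lagr_bot : ∀ (a : Euc n) (b : Euc m), f a ≠ ⊤ → fenchel g b = ⊤ →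
      Lagr a b = ⊥ := by
    intro a b ha hb
    rw [hLagr, hb, ← EReal.coe_toReal ha (hfB a), ← EReal.coe_add, PDHG.coe_sub_top]
  have lagr_top : ∀ (a : Euc n) (b : Euc m), f a = ⊤ → fenchel g b ≠ ⊤ →
      Lagr a b = ⊤ := by
    intro a b ha hb
    rw [hLagr, ha, ← EReal.coe_toReal hb (hgB b), EReal.top_add_coe, EReal.top_sub_coe]
  -- finiteness at any saddle point
  have sad_fin : ∀ (xs : Euc n) (ls : Euc m),
      (∀ (x' : Euc n) (lam' : Euc m), Lagr xs lam' ≤ Lagr xs ls ∧ Lagr xs ls ≤ Lagr x' ls) →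
      f xs ≠ ⊤ ∧ fenchel g ls ≠ ⊤ := by
    intro xs ls hs
    have hGls : fenchel g ls ≠ ⊤ := by
      intro hc
      have h1 : Lagr (x 1) ls = ⊥ := lagr_bot _ _ hfT1 hc
      have h2 := (hs (x 1) ls).2
      rw [h1] at h2
      have h3 : Lagr xs ls = ⊥ := le_bot_iff.mp h2
      have h4 := (hs xs (lam 1)).1
      rw [h3] at h4
      have h5 : Lagr xs (lam 1) = ⊥ := le_bot_iff.mp h4
      rw [hLagr] at h5
      have h6 : f xs + ((inner ℝ (L xs) (lam 1) : ℝ) : EReal)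
          - (((fenchel g (lam 1)).toReal : ℝ) : EReal) ≠ ⊥ :=
        PDHG.sub_coe_ne_bot _ (PDHG.add_coe_ne_bot _ (hfB xs) _) _
      rw [EReal.coe_toReal hGT1 (hgB _)] at h6
      exact h6 h5
    constructor
    · intro hc
      have h1 : Lagr xs (lam 1) = ⊤ := lagr_top _ _ hc hGT1
      have h2 := (hs (x 1) (lam 1)).1
      have h3 := (hs (x 1) (lam 1)).2
      have h4 : Lagr (x 1) ls = (((f (x 1)).toReal + (inner ℝ (L (x 1)) ls : ℝ)
          - (fenchel g ls).toReal : ℝ) : EReal) := lagr_coe _ _ hfT1 hGls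
      rw [h1] at h2
      have h5 : Lagr xs ls = ⊤ := top_le_iff.mp h2
      rw [h5, h4] at h3
      exact (EReal.coe_ne_top _) (top_le_iff.mp h3)
    · exact hGls
  -- real saddle inequalities
  have sadreal : ∀ (xs : Euc n) (ls : Euc m),
      (∀ (x' : Euc n) (lam' : Euc m), Lagr xs lam' ≤ Lagr xs ls ∧ Lagr xs ls ≤ Lagr x' ls) →
      ∀ k, ((f xs).toReal + (inner ℝ (L xs) ls : ℝ)
          ≤ (f (x (k+1))).toReal + (inner ℝ (L (x (k+1))) ls : ℝ))
        ∧ ((inner ℝ (L xs) (lam (k+1)) : ℝ) - (fenchel g (lam (k+1))).toReal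
          ≤ (inner ℝ (L xs) ls : ℝ) - (fenchel g ls).toReal) := by
    intro xs ls hs k
    obtain ⟨hxsT, hlsT⟩ := sad_fin xs ls hs
    constructor
    · have h1 := (hs (x (k+1)) ls).2
      rw [lagr_coe _ _ hxsT hlsT, lagr_coe _ _ (hfT k) hlsT, EReal.coe_le_coe_iff] at h1
      linarith
    · have h1 := (hs xs (lam (k+1))).1
      rw [lagr_coe _ _ hxsT (hGT k), lagr_coe _ _ hxsT hlsT, EReal.coe_le_coe_iff] at h1
      linarith
  -- the quadratic "distance"
  set Hq : Euc n → Euc m → ℝ := fun u v =>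
    ‖u‖ ^ 2 / α + ‖v‖ ^ 2 / β - 2 * (inner ℝ (L u) v : ℝ) with hHq
  obtain ⟨δ1, δ2, hδ1, hδ2, hδ⟩ := PDHG.H_lower L hα hβ hstep
  have hHq_nonneg : ∀ u v, 0 ≤ Hq u v := by
    intro u v
    have := hδ u v
    have h1 : 0 ≤ δ1 * ‖u‖ ^ 2 := by positivity
    have h2 : 0 ≤ δ2 * ‖v‖ ^ 2 := by positivity
    rw [hHq]; dsimp only; linarith
  -- one-step monotonicity for any saddle point
  have monoH : ∀ (xs : Euc n) (ls : Euc m),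
      (∀ (x' : Euc n) (lam' : Euc m), Lagr xs lam' ≤ Lagr xs ls ∧ Lagr xs ls ≤ Lagr x' ls) →
      ∀ k, Hq (x (k+1) - xs) (lam (k+1) - ls) + Hq (x (k+1) - x k) (lam (k+1) - lam k)
        ≤ Hq (x k - xs) (lam k - ls) := by
    intro xs ls hs k
    obtain ⟨hxsT, hlsT⟩ := sad_fin xs ls hs
    obtain ⟨hS1, hS2⟩ := sadreal xs ls hs k
    have hVI1 := PDHG.prox_vi hα hf_cvx hfB (hxit k) (hfT k) hxsT
    have hVI2 := PDHG.prox_vi hβ hGcvx hgB (hlamit k) (hGT k) hlsT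
    have := PDHG.mono_step L hα hβ (x k) (x (k+1)) xs (lam k) (lam (k+1)) ls
      ((f (x (k+1))).toReal) ((f xs).toReal)
      ((fenchel g (lam (k+1))).toReal) ((fenchel g ls).toReal)
      hVI1 hVI2 (by linarith) hS2
    rw [hHq]; dsimp only; linarith [this]
  -- now use the given saddle point for boundedness
  obtain ⟨xst, lst, hsad0⟩ := hsaddle
  set D : ℕ → ℝ := fun k => Hq (x k - xst) (lam k - lst) with hD
  have hDstep : ∀ k, D (k+1) + Hq (x (k+1) - x k) (lam (k+1) - lam k) ≤ D k :=
    fun k => monoH xst lst hsad0 k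
  have hDanti : Antitone D := antitone_nat_of_succ_le (fun k => by
    have := hDstep k
    have := hHq_nonneg (x (k+1) - x k) (lam (k+1) - lam k)
    linarith)
  have hD0 : ∀ k, 0 ≤ D k := fun k => hHq_nonneg _ _
  have hDconv : Filter.Tendsto D Filter.atTop (𝓝 (⨅ k, D k)) :=
    tendsto_atTop_ciInf hDanti ⟨0, fun y hy => by
      obtain ⟨k, rfl⟩ := hy; exact hD0 k⟩
  have hDshift : Filter.Tendsto (fun k => D (k+1)) Filter.atTop (𝓝 (⨅ k, D k)) :=
    hDconv.comp (Filter.tendsto_add_atTop_nat 1)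
  have hstep0 : Filter.Tendsto (fun k => Hq (x (k+1) - x k) (lam (k+1) - lam k))
      Filter.atTop (𝓝 0) := by
    have h1 : Filter.Tendsto (fun k => D k - D (k+1)) Filter.atTop (𝓝 0) := by
      have := hDconv.sub hDshift
      simpa using this
    apply tendsto_of_tendsto_of_tendsto_of_le_of_le tendsto_const_nhds h1
    · intro k; exact hHq_nonneg _ _
    · intro k; have := hDstep k; dsimp only; linarith
  -- Hq-controlled convergence to zero
  have norm_conv : ∀ (w : ℕ → Euc n) (q : ℕ → Euc m),
      Filter.Tendsto (fun k => Hq (w k) (q k)) Filter.atTop (𝓝 0) →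
      Filter.Tendsto w Filter.atTop (𝓝 0) ∧ Filter.Tendsto q Filter.atTop (𝓝 0) := by
    intro w q hT
    have hbw : ∀ k, ‖w k‖ ^ 2 ≤ Hq (w k) (q k) / δ1 := by
      intro k
      rw [le_div_iff₀ hδ1]
      have := hδ (w k) (q k)
      have h2 : 0 ≤ δ2 * ‖q k‖ ^ 2 := by positivity
      rw [hHq]; dsimp only; nlinarith
    have hbq : ∀ k, ‖q k‖ ^ 2 ≤ Hq (w k) (q k) / δ2 := by
      intro k
      rw [le_div_iff₀ hδ2]
      have := hδ (w k) (q k)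
      have h2 : 0 ≤ δ1 * ‖w k‖ ^ 2 := by positivity
      rw [hHq]; dsimp only; nlinarith
    have hsqw : Filter.Tendsto (fun k => ‖w k‖ ^ 2) Filter.atTop (𝓝 0) := by
      apply tendsto_of_tendsto_of_tendsto_of_le_of_le tendsto_const_nhds
        (by simpa using (hT.div_const δ1)) (fun k => by positivity) hbw
    have hsqq : Filter.Tendsto (fun k => ‖q k‖ ^ 2) Filter.atTop (𝓝 0) := by
      apply tendsto_of_tendsto_of_tendsto_of_le_of_le tendsto_const_nhds
        (by simpa using (hT.div_const δ2)) (fun k => by positivity) hbq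
    constructor
    · rw [tendsto_zero_iff_norm_tendsto_zero]
      have h1 : (fun k => ‖w k‖) = fun k => Real.sqrt (‖w k‖ ^ 2) := by
        funext k; rw [Real.sqrt_sq (norm_nonneg _)]
      rw [h1]
      have h2 := (Real.continuous_sqrt.tendsto 0).comp hsqw
      rw [Real.sqrt_zero] at h2
      exact h2
    · rw [tendsto_zero_iff_norm_tendsto_zero]
      have h1 : (fun k => ‖q k‖) = fun k => Real.sqrt (‖q k‖ ^ 2) := by
        funext k; rw [Real.sqrt_sq (norm_nonneg _)]
      rw [h1]
      have h2 := (Real.continuous_sqrt.tendsto 0).comp hsqq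
      rw [Real.sqrt_zero] at h2
      exact h2
  obtain ⟨hdx, hdlam⟩ := norm_conv (fun k => x (k+1) - x k) (fun k => lam (k+1) - lam k) hstep0
  -- boundedness of the iterates
  set R1 : ℝ := Real.sqrt (D 0 / δ1) with hR1
  set R2 : ℝ := Real.sqrt (D 0 / δ2) with hR2
  have hmemball : ∀ k, (x k, lam k) ∈
      (Metric.closedBall xst R1) ×ˢ (Metric.closedBall lst R2) := by
    intro k
    have hDk : D k ≤ D 0 := hDanti (Nat.zero_le k)
    have h1 := hδ (x k - xst) (lam k - lst)
    have h2 : δ1 * ‖x k - xst‖ ^ 2 + δ2 * ‖lam k - lst‖ ^ 2 ≤ D 0 := by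
      rw [hD, hHq] at *; dsimp only at *; linarith
    constructor
    · rw [Metric.mem_closedBall, dist_eq_norm, hR1]
      rw [Real.le_sqrt (norm_nonneg _) (div_nonneg (hD0 0) hδ1.le)]
      rw [le_div_iff₀ hδ1]
      nlinarith [norm_nonneg (lam k - lst), sq_nonneg (‖lam k - lst‖)]
    · rw [Metric.mem_closedBall, dist_eq_norm, hR2]
      rw [Real.le_sqrt (norm_nonneg _) (div_nonneg (hD0 0) hδ2.le)]
      rw [le_div_iff₀ hδ2]
      nlinarith [norm_nonneg (x k - xst), sq_nonneg (‖x k - xst‖)]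
  obtain ⟨⟨xb, lb⟩, _, φ, hφmono, hφtend⟩ :=
    ((isCompact_closedBall xst R1).prod (isCompact_closedBall lst R2)).tendsto_subseq hmemball
  have hφatTop := hφmono.tendsto_atTop
  have hxbt : Filter.Tendsto (fun j => x (φ j)) Filter.atTop (𝓝 xb) := by
    have := (continuous_fst.tendsto ((xb, lb) : Euc n × Euc m)).comp hφtend
    simpa [Function.comp_def] using this
  have hlbt : Filter.Tendsto (fun j => lam (φ j)) Filter.atTop (𝓝 lb) := by
    have := (continuous_snd.tendsto ((xb, lb) : Euc n × Euc m)).comp hφtend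
    simpa [Function.comp_def] using this
  have hxbt1 : Filter.Tendsto (fun j => x (φ j + 1)) Filter.atTop (𝓝 xb) := by
    have h1 : (fun j => x (φ j + 1)) = fun j => (x (φ j)) + (x (φ j + 1) - x (φ j)) := by
      funext j; abel
    rw [h1]
    simpa using hxbt.add (hdx.comp hφatTop)
  have hlbt1 : Filter.Tendsto (fun j => lam (φ j + 1)) Filter.atTop (𝓝 lb) := by
    have h1 : (fun j => lam (φ j + 1)) = fun j => (lam (φ j)) + (lam (φ j + 1) - lam (φ j)) := by
      funext j; abel
    rw [h1]
    simpa using hlbt.add (hdlam.comp hφatTop)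
  -- limits of the prox iterations
  have hz1 : Filter.Tendsto (fun j => x (φ j) - α • (ContinuousLinearMap.adjoint L) (lam (φ j)))
      Filter.atTop (𝓝 (xb - α • (ContinuousLinearMap.adjoint L) lb)) :=
    hxbt.sub ((((ContinuousLinearMap.adjoint L).continuous.tendsto lb).comp hlbt).const_smul α)
  have hprox1 : IsProxPt f α (xb - α • (ContinuousLinearMap.adjoint L) lb) xb :=
    PDHG.prox_limit hf_closed hfB hz1 hxbt1 (fun j => hxit (φ j))
  have hz2 : Filter.Tendsto (fun j => lam (φ j) + β • L ((2:ℝ) • x (φ j + 1) - x (φ j)))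
      Filter.atTop (𝓝 (lb + β • L ((2:ℝ) • xb - xb))) :=
    hlbt.add ((((L.continuous.tendsto _).comp
      ((hxbt1.const_smul (2:ℝ)).sub hxbt))).const_smul β)
  have hprox2 : IsProxPt (fenchel g) β (lb + β • L ((2:ℝ) • xb - xb)) lb :=
    PDHG.prox_limit hGclosed hgB hz2 hlbt1 (fun j => hlamit (φ j))
  have hfxbT : f xb ≠ ⊤ := PDHG.prox_ne_top hprox1 hx0f
  have hGlbT : fenchel g lb ≠ ⊤ := PDHG.prox_ne_top hprox2 hv0
  -- variational inequalities at the limit point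
  have hVb1 : ∀ u : Euc n, f u ≠ ⊤ →
      (f xb).toReal + ((inner ℝ lb (L xb) : ℝ) - (inner ℝ lb (L u) : ℝ)) ≤ (f u).toReal := by
    intro u hu
    have h := PDHG.prox_vi hα hf_cvx hfB hprox1 hfxbT hu
    have e : (inner ℝ ((xb - α • (ContinuousLinearMap.adjoint L) lb) - xb) (u - xb) : ℝ) / α
        = (inner ℝ lb (L xb) : ℝ) - (inner ℝ lb (L u) : ℝ) := by
      have h2 : (xb - α • (ContinuousLinearMap.adjoint L) lb) - xb
          = -(α • (ContinuousLinearMap.adjoint L) lb) := by abel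
      rw [h2, inner_neg_left, real_inner_smul_left, ContinuousLinearMap.adjoint_inner_left,
        map_sub, inner_sub_right]
      field_simp
      ring
    linarith [h, e]
  have hVb2 : ∀ v : Euc m, fenchel g v ≠ ⊤ →
      (fenchel g lb).toReal + ((inner ℝ (L xb) v : ℝ) - (inner ℝ (L xb) lb : ℝ))
        ≤ (fenchel g v).toReal := by
    intro v hv
    have h := PDHG.prox_vi hβ hGcvx hgB hprox2 hGlbT hv
    have e : (inner ℝ ((lb + β • L ((2:ℝ) • xb - xb)) - lb) (v - lb) : ℝ) / β
        = (inner ℝ (L xb) v : ℝ) - (inner ℝ (L xb) lb : ℝ) := by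
      have h0 : (2:ℝ) • xb - xb = xb := by rw [two_smul]; abel
      have h2 : (lb + β • L ((2:ℝ) • xb - xb)) - lb = β • L xb := by rw [h0]; abel
      rw [h2, real_inner_smul_left, inner_sub_right]
      field_simp
    linarith [h, e]
  -- the limit point is a saddle point
  have hsadb : ∀ (x' : Euc n) (lam' : Euc m),
      Lagr xb lam' ≤ Lagr xb lb ∧ Lagr xb lb ≤ Lagr x' lb := by
    intro x' lam'
    constructor
    · by_cases hl' : fenchel g lam' = ⊤
      · rw [lagr_bot _ _ hfxbT hl']; exact bot_le
      · rw [lagr_coe _ _ hfxbT hl', lagr_coe _ _ hfxbT hGlbT, EReal.coe_le_coe_iff]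
        have := hVb2 lam' hl'
        linarith
    · by_cases hx' : f x' = ⊤
      · rw [lagr_top _ _ hx' hGlbT]; exact le_top
      · rw [lagr_coe _ _ hfxbT hGlbT, lagr_coe _ _ hx' hGlbT, EReal.coe_le_coe_iff]
        have := hVb1 x' hx'
        linarith [real_inner_comm (L xb) lb, real_inner_comm (L x') lb,
          real_inner_comm lb (L xb), real_inner_comm lb (L x')]
  -- convergence of the whole sequence to the limit point
  set K : ℕ → ℝ := fun k => Hq (x k - xb) (lam k - lb) with hK
  have hKanti : Antitone K := antitone_nat_of_succ_le (fun k => by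
    have h1 := monoH xb lb hsadb k
    have h2 := hHq_nonneg (x (k+1) - x k) (lam (k+1) - lam k)
    rw [hK]; dsimp only; linarith)
  have hKφ : Filter.Tendsto (fun j => K (φ j)) Filter.atTop (𝓝 0) := by
    have hu : Filter.Tendsto (fun j => x (φ j) - xb) Filter.atTop (𝓝 0) :=
      tendsto_sub_nhds_zero_iff.mpr hxbt
    have hv : Filter.Tendsto (fun j => lam (φ j) - lb) Filter.atTop (𝓝 0) :=
      tendsto_sub_nhds_zero_iff.mpr hlbt
    have h1 : Filter.Tendsto (fun j => ‖x (φ j) - xb‖ ^ 2 / α + ‖lam (φ j) - lb‖ ^ 2 / β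
        - 2 * (inner ℝ (L (x (φ j) - xb)) (lam (φ j) - lb) : ℝ)) Filter.atTop
        (𝓝 (‖(0 : Euc n)‖ ^ 2 / α + ‖(0 : Euc m)‖ ^ 2 / β
          - 2 * (inner ℝ (L (0 : Euc n)) ((0 : Euc m)) : ℝ))) := by
      exact (((hu.norm.pow 2).div_const α).add ((hv.norm.pow 2).div_const β)).sub
        ((((L.continuous.tendsto 0).comp hu).inner hv).const_mul 2)
    simp only [norm_zero, map_zero, inner_zero_left, ne_eq, OfNat.ofNat_ne_zero,
      not_false_eq_true, zero_pow, zero_div, add_zero, mul_zero, sub_zero, zero_add] at h1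
    exact h1
  have hK0 : Filter.Tendsto K Filter.atTop (𝓝 0) :=
    PDHG.antitone_tendsto_zero hKanti (fun k => hHq_nonneg _ _) hφmono hKφ
  obtain ⟨hxfin, hlamfin⟩ := norm_conv (fun k => x k - xb) (fun k => lam k - lb) hK0
  exact ⟨xb, lb, hsadb, tendsto_sub_nhds_zero_iff.mp hxfin,
    tendsto_sub_nhds_zero_iff.mp hlamfin⟩
end
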